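/- In a symmetric monoidal category with a poalgebra, the naturality-type identity X^{n+2}_I ∘ G^n_i = G^n_i ∘ X^{n+1}_{τ(I)} holds, where G^n_i = id_i ⊗ γ ⊗ id_{n-i} : n+2 → n+2, X^m_I = S^m ∘ W^m_I ∘ H^m, and τ = τ^{n+1}_i is the adjacent transposition swapping i and i+1 acting on subsets I ⊆ [n+1] elementwise. -/

import Mathlib

/-- The data of a category with natural numbers as objects, together with a
tensor product acting as addition on objects (a candidate strict monoidal
structure). Composition is written in diagrammatic order. -/
structure MonCatN : Type 1 where
  Hom : ℕ → ℕ → Type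
  id : ∀ n : ℕ, Hom n n
  comp : ∀ {m n p : ℕ}, Hom m n → Hom n p → Hom m p
  tensor : ∀ {m n m' n' : ℕ}, Hom m n → Hom m' n' → Hom (m + m') (n + n')

/-- Transport of morphisms along equalities of objects. -/
def MonCatN.cst (C : MonCatN) {a b c d : ℕ} (h1 : a = c) (h2 : b = d)
    (f : C.Hom a b) : C.Hom c d :=
  cast (by rw [h1, h2] : C.Hom a b = C.Hom c d) f

/-- The axioms of a strict monoidal category structure on `C`. -/
structure IsStrictMon (C : MonCatN) : Prop where
  id_comp : ∀ {m n} (f : C.Hom m n), C.comp (C.id m) f = f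
  comp_id : ∀ {m n} (f : C.Hom m n), C.comp f (C.id n) = f
  comp_assoc : ∀ {m n p q} (f : C.Hom m n) (g : C.Hom n p) (h : C.Hom p q),
    C.comp (C.comp f g) h = C.comp f (C.comp g h)
  tensor_id : ∀ m n, C.tensor (C.id m) (C.id n) = C.id (m + n)
  tensor_comp : ∀ {m n p m' n' p'} (f₁ : C.Hom m n) (g₁ : C.Hom n p)
    (f₂ : C.Hom m' n') (g₂ : C.Hom n' p'),
    C.tensor (C.comp f₁ g₁) (C.comp f₂ g₂) = C.comp (C.tensor f₁ f₂) (C.tensor g₁ g₂)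
  tensor_assoc : ∀ {m n m' n' m'' n''} (f : C.Hom m n) (g : C.Hom m' n')
    (h : C.Hom m'' n''),
    C.tensor (C.tensor f g) h =
      C.cst (Nat.add_assoc m m' m'').symm (Nat.add_assoc n n' n'').symm
        (C.tensor f (C.tensor g h))
  tensor_unit_l : ∀ {m n} (f : C.Hom m n),
    C.tensor (C.id 0) f = C.cst (Nat.zero_add m).symm (Nat.zero_add n).symm f
  tensor_unit_r : ∀ {m n} (f : C.Hom m n), C.tensor f (C.id 0) = f

/-- The axioms of a strict symmetric monoidal category structure on `C` with
symmetry family `γ`. -/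
structure IsStrictSymMon (C : MonCatN) (γ : ∀ m n : ℕ, C.Hom (m + n) (n + m))
    extends IsStrictMon C : Prop where
  braiding_natural : ∀ {m n m' n'} (f : C.Hom m n) (g : C.Hom m' n'),
    C.comp (C.tensor f g) (γ n n') = C.comp (γ m m') (C.tensor g f)
  symmetry : ∀ m n, C.comp (γ m n) (γ n m) = C.id (m + n)
  gamma_zero : ∀ n, γ 0 n = C.cst (Nat.zero_add n).symm (Nat.add_zero n).symm (C.id n)
  hexagon : ∀ m n p,
    γ (m + n) p =
      C.comp
        (C.cst (by omega) (by omega) (C.tensor (C.id m) (γ n p)) :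
          C.Hom ((m + n) + p) (m + (p + n)))
        (C.cst (by omega) (by omega) (C.tensor (γ m p) (C.id n)) :
          C.Hom (m + (p + n)) (p + (m + n)))

/-- A poalgebra in `C` (on the object `1`): a qualitative bicommutative
bialgebra `(η, μ, ε, δ)` together with `σ : 1 → 1` satisfying the
transitivity axiom `μ ∘ (id ⊗ σ) ∘ δ = σ`. -/
structure PoalgebraIn (C : MonCatN) (γ : ∀ m n : ℕ, C.Hom (m + n) (n + m)) where
  η : C.Hom 0 1
  μ : C.Hom 2 1
  ε : C.Hom 1 0
  δ : C.Hom 1 2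
  σ : C.Hom 1 1
  unit_l : C.comp (C.tensor η (C.id 1)) μ = C.id 1
  unit_r : C.comp (C.tensor (C.id 1) η) μ = C.id 1
  mul_assoc : C.comp (C.tensor μ (C.id 1)) μ = C.comp (C.tensor (C.id 1) μ) μ
  mul_comm : C.comp (γ 1 1) μ = μ
  counit_l : C.comp δ (C.tensor ε (C.id 1)) = C.id 1
  counit_r : C.comp δ (C.tensor (C.id 1) ε) = C.id 1
  comul_coassoc : C.comp δ (C.tensor δ (C.id 1)) = C.comp δ (C.tensor (C.id 1) δ)
  comul_cocomm : C.comp δ (γ 1 1) = δ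
  bialg : C.comp μ δ =
    C.comp (C.tensor δ δ)
      (C.comp
        ((C.tensor (C.id 1) ((C.tensor (γ 1 1) (C.id 1) : C.Hom 3 3)) : C.Hom 4 4))
        ((C.tensor μ μ : C.Hom 4 2)))
  counit_unit : C.comp η ε = C.id 0
  qualitative : C.comp δ μ = C.id 1
  transitivity : C.comp δ (C.comp (C.tensor (C.id 1) σ) μ) = σ

section Defs

variable (C : MonCatN) (γ : ∀ m n : ℕ, C.Hom (m + n) (n + m)) (P : PoalgebraIn C γ)

/-- `W^n_i : n+1 → n+1`: copy the `i`-th strand with `δ`, move the copy past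
the strands `i+1, …, n-1` with the symmetry, and merge it into the last strand
with `μ` (for `i ∈ [n]`; identity otherwise). -/
def Wd (n i : ℕ) : C.Hom (n + 1) (n + 1) :=
  if h : i < n then
    C.comp
      (C.cst (by omega) (by omega)
        (C.tensor (C.id i) (C.tensor P.δ (C.id (n - i)))) :
          C.Hom (n + 1) (i + (2 + (n - i))))
      (C.comp
        (C.cst (by omega) (by omega)
          (C.tensor (C.id (i + 1)) (C.tensor (γ 1 (n - i - 1)) (C.id 1))) :
            C.Hom (i + (2 + (n - i))) (n + 2))
        (C.tensor (C.id n) P.μ))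
  else C.id (n + 1)

/-- `W^n_I`: the composite of the `W^n_i` for `i ∈ I` (well defined up to the
commutation and idempotence of the `W^n_i`); `W^n_∅ = id`. -/
noncomputable def WId (n : ℕ) (I : Finset ℕ) : C.Hom (n + 1) (n + 1) :=
  (I.sort (· ≤ ·)).foldl (fun g i => C.comp g (Wd C γ P n i)) (C.id (n + 1))

/-- `H^n = id_n ⊗ η : n → n+1`. -/
def Hd (n : ℕ) : C.Hom n (n + 1) := C.tensor (C.id n) P.η

/-- `S^n = id_n ⊗ σ : n+1 → n+1`. -/
def Sd (n : ℕ) : C.Hom (n + 1) (n + 1) := C.tensor (C.id n) P.σ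

/-- `G^n = id_n ⊗ γ_{1,1} : n+2 → n+2`. -/
def Gd (n : ℕ) : C.Hom (n + 2) (n + 2) := C.tensor (C.id n) (γ 1 1)

/-- `G^n_i = id_i ⊗ γ ⊗ id_{n-i} : n+2 → n+2` (for `i ≤ n`; identity
otherwise). -/
def Gdi (n i : ℕ) : C.Hom (n + 2) (n + 2) :=
  if h : i ≤ n then
    C.cst (by omega) (by omega)
      (C.tensor (C.tensor (C.id i) (γ 1 1)) (C.id (n - i)))
  else C.id (n + 2)

/-- `X^n_I = S^n ∘ W^n_I ∘ H^n : n → n+1`. -/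
noncomputable def Xd (n : ℕ) (I : Finset ℕ) : C.Hom n (n + 1) :=
  C.comp (Hd C γ P n) (C.comp (WId C γ P n I) (Sd C γ P n))

/-- The composite `X^{m+k-1}_{I_{k-1}} ∘ … ∘ X^m_{I_0}` of a list of `X`'s,
written in diagrammatic order. -/
noncomputable def Xchain (m : ℕ) : ∀ Is : List (Finset ℕ), C.Hom m (m + Is.length)
  | [] => C.id m
  | I :: rest =>
      C.comp (Xd C γ P m I)
        (C.cst rfl (by simp; omega) (Xchain (m + 1) rest))

/-- The adjacent transposition `τ_p` exchanging `p` and `p+1`, acting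
elementwise on a finite set of naturals. -/
def tauF (p : ℕ) (I : Finset ℕ) : Finset ℕ :=
  I.image (fun a => if a = p then p + 1 else if a = p + 1 then p else a)

end Defs

/-! ### Toolkit: heterogeneous equality of morphisms -/

section Toolkit

/-- A cast with autoparam `omega` proofs. -/
def MonCatN.c (C : MonCatN) {a b : ℕ} (a' b' : ℕ) (f : C.Hom a b)
    (h1 : a = a' := by omega) (h2 : b = b' := by omega) : C.Hom a' b' :=
  C.cst h1 h2 f

/-- Heterogeneous equality of morphisms. -/
def MEq (C : MonCatN) {a b c d : ℕ} (f : C.Hom a b) (g : C.Hom c d) : Prop :=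
  a = c ∧ b = d ∧ HEq f g

variable {C : MonCatN}

theorem mrfl {a b : ℕ} {f : C.Hom a b} : MEq C f f := ⟨Eq.refl _, Eq.refl _, HEq.rfl⟩

theorem MEq.ofEq {a b : ℕ} {f g : C.Hom a b} (h : f = g) : MEq C f g :=
  ⟨rfl, rfl, heq_of_eq h⟩

theorem MEq.symm {a b c d : ℕ} {f : C.Hom a b} {g : C.Hom c d}
    (h : MEq C f g) : MEq C g f := ⟨h.1.symm, h.2.1.symm, h.2.2.symm⟩

theorem MEq.trans {a b c d e e' : ℕ} {f : C.Hom a b} {g : C.Hom c d}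
    {h : C.Hom e e'} (h1 : MEq C f g) (h2 : MEq C g h) : MEq C f h :=
  ⟨h1.1.trans h2.1, h1.2.1.trans h2.2.1, h1.2.2.trans h2.2.2⟩

theorem MEq.eq {a b : ℕ} {f g : C.Hom a b} (h : MEq C f g) : f = g :=
  eq_of_heq h.2.2

instance {a b c d e e' : ℕ} :
    Trans (MEq C (a := a) (b := b) (c := c) (d := d))
      (MEq C (a := c) (b := d) (c := e) (d := e'))
      (MEq C (a := a) (b := b) (c := e) (d := e')) :=
  ⟨MEq.trans⟩

theorem mcst {a b c d : ℕ} (h1 : a = c) (h2 : b = d) (f : C.Hom a b) :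
    MEq C (C.cst h1 h2 f) f := ⟨h1.symm, h2.symm, cast_heq _ _⟩

theorem mc {a b : ℕ} (a' b' : ℕ) (f : C.Hom a b) {h1 : a = a'} {h2 : b = b'} :
    MEq C (C.c a' b' f h1 h2) f := mcst h1 h2 f

theorem mcomp {a b c a' b' c' : ℕ} {f : C.Hom a b} {g : C.Hom b c}
    {f' : C.Hom a' b'} {g' : C.Hom b' c'} (h1 : MEq C f f') (h2 : MEq C g g') :
    MEq C (C.comp f g) (C.comp f' g') := by
  obtain ⟨ha, hb, hf⟩ := h1
  obtain ⟨hb', hc, hg⟩ := h2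
  subst ha; subst hb; subst hc
  rw [eq_of_heq hf, eq_of_heq hg]
  exact mrfl

theorem mtensor {a b c d a' b' c' d' : ℕ} {f : C.Hom a b} {g : C.Hom c d}
    {f' : C.Hom a' b'} {g' : C.Hom c' d'} (h1 : MEq C f f') (h2 : MEq C g g') :
    MEq C (C.tensor f g) (C.tensor f' g') := by
  obtain ⟨ha, hb, hf⟩ := h1
  obtain ⟨hc, hd, hg⟩ := h2
  subst ha; subst hb; subst hc; subst hd
  rw [eq_of_heq hf, eq_of_heq hg]
  exact mrfl

theorem mid {a b : ℕ} (h : a = b) : MEq C (C.id a) (C.id b) := by subst h; exact mrfl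

theorem c_id {a b : ℕ} (h1 h2 : a = b) : C.cst h1 h2 (C.id a) = C.id b := by
  subst h1; rfl

/-- If the second factor of a (well-typed) composite is het-equal to an
identity, the composite is het-equal to the first factor. -/
theorem mcomp_id_right (hC : IsStrictMon C) {a b d e : ℕ} {f : C.Hom a b}
    {g : C.Hom b d} (hg : MEq C g (C.id e)) : MEq C (C.comp f g) f := by
  obtain ⟨hb, hd, hgg⟩ := hg
  subst hb; subst hd
  rw [eq_of_heq hgg, hC.comp_id]
  exact mrfl

theorem mcomp_id_left (hC : IsStrictMon C) {a b d e : ℕ} {f : C.Hom a b}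
    {g : C.Hom b d} (hf : MEq C f (C.id e)) : MEq C (C.comp f g) g := by
  obtain ⟨hb, hd, hff⟩ := hf
  subst hb; subst hd
  rw [eq_of_heq hff, hC.id_comp]
  exact mrfl

end Toolkit

notation:50 f " ≋ " g => MEq _ f g
section Derived

variable {C : MonCatN} {γ : ∀ m n : ℕ, C.Hom (m + n) (n + m)}

/-- Interchange: merge a composition of tensors componentwise. -/
theorem tcomp (hC : IsStrictSymMon C γ) {m n p m' n' p' : ℕ} (f₁ : C.Hom m n) (g₁ : C.Hom n p)
    (f₂ : C.Hom m' n') (g₂ : C.Hom n' p') :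
    C.comp (C.tensor f₁ f₂) (C.tensor g₁ g₂) =
      C.tensor (C.comp f₁ g₁) (C.comp f₂ g₂) :=
  (hC.tensor_comp f₁ g₁ f₂ g₂).symm

theorem exch1 (hC : IsStrictSymMon C γ) {a a' b b' : ℕ} (f : C.Hom a a') (g : C.Hom b b') :
    C.comp (C.tensor f (C.id b)) (C.tensor (C.id a') g) = C.tensor f g := by
  rw [tcomp hC, hC.comp_id, hC.id_comp]

theorem exch2 (hC : IsStrictSymMon C γ) {a a' b b' : ℕ} (f : C.Hom a a') (g : C.Hom b b') :
    C.comp (C.tensor (C.id a) g) (C.tensor f (C.id b')) = C.tensor f g := by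
  rw [tcomp hC, hC.comp_id, hC.id_comp]

theorem exch12 (hC : IsStrictSymMon C γ) {a a' b b' : ℕ} (f : C.Hom a a') (g : C.Hom b b') :
    C.comp (C.tensor f (C.id b)) (C.tensor (C.id a') g) =
      C.comp (C.tensor (C.id a) g) (C.tensor f (C.id b')) := by
  rw [exch1 hC, exch2 hC]

theorem mtassoc (hC : IsStrictSymMon C γ) {m n m' n' m'' n'' : ℕ} (f : C.Hom m n) (g : C.Hom m' n')
    (h : C.Hom m'' n'') :
    MEq C (C.tensor (C.tensor f g) h) (C.tensor f (C.tensor g h)) :=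
  (MEq.ofEq (hC.tensor_assoc f g h)).trans (mcst _ _ _)

theorem munitl (hC : IsStrictSymMon C γ) {m n : ℕ} (f : C.Hom m n) : MEq C (C.tensor (C.id 0) f) f :=
  (MEq.ofEq (hC.tensor_unit_l f)).trans (mcst _ _ _)

theorem mγ0l (hC : IsStrictSymMon C γ) (n : ℕ) : MEq C (γ 0 n) (C.id n) :=
  (MEq.ofEq (hC.gamma_zero n)).trans (mcst _ _ _)

theorem mγ0r (hC : IsStrictSymMon C γ) (n : ℕ) : MEq C (γ n 0) (C.id n) := by
  calc (γ n 0) ≋ C.comp (γ n 0) (C.c (0 + n) (n + 0) (C.id n)) :=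
        (mcomp_id_right hC.toIsStrictMon (mc _ _ _)).symm
    _ ≋ C.comp (γ n 0) (γ 0 n) := mcomp mrfl ((mc _ _ _).trans (mγ0l hC n).symm)
    _ ≋ C.id (n + 0) := MEq.ofEq (hC.symmetry n 0)
    _ ≋ C.id n := mid (by omega)

/-- left hexagon, cast-light form -/
theorem mhexl (hC : IsStrictSymMon C γ) (m n p : ℕ) :
    MEq C (γ (m + n) p)
      (C.comp (C.tensor (C.id m) (γ n p))
        (C.c (m + (p + n)) (p + (m + n)) (C.tensor (γ m p) (C.id n)))) :=
  (MEq.ofEq (hC.hexagon m n p)).trans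
    (mcomp (mcst _ _ _) ((mcst _ _ _).trans (mc _ _ _).symm))

/-- right hexagon, derived -/
theorem mhexr (hC : IsStrictSymMon C γ) (m n p : ℕ) :
    MEq C (γ m (n + p))
      (C.comp (C.tensor (γ m n) (C.id p))
        (C.c ((n + m) + p) (n + (p + m)) (C.tensor (C.id n) (γ m p)))) := by
  have hM := hC.toIsStrictMon
  set A := C.tensor (γ m n) (C.id p) with hA
  set B := C.tensor (C.id n) (γ m p) with hB
  set K := C.comp A (C.c ((n + m) + p) (n + (p + m)) B) with hK
  set K' := C.c (m + (n + p)) (n + (p + m)) K with hK'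
  set D := γ (n + p) m with hD
  set E := C.tensor (C.id n) (γ p m) with hE
  set F := C.tensor (γ n m) (C.id p) with hF
  set cF' := C.c (n + (m + p)) ((m + n) + p) F with hcF'
  -- the inner cancellation
  have hFA : MEq C (C.comp cF' A) (C.id ((n + m) + p)) := by
    calc (C.comp cF' A) ≋ C.comp F A := mcomp (mc _ _ _) mrfl
      _ ≋ C.tensor (C.comp (γ n m) (γ m n)) (C.comp (C.id p) (C.id p)) :=
          MEq.ofEq (tcomp hC _ _ _ _)
      _ ≋ C.tensor (C.id (n + m)) (C.id p) :=
          mtensor (MEq.ofEq (hC.symmetry n m)) (MEq.ofEq (hM.id_comp _))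
      _ ≋ C.id ((n + m) + p) := MEq.ofEq (hM.tensor_id _ _)
  have hDK : MEq C (C.comp D K') (C.id ((n + p) + m)) := by
    have h1 : MEq C D (C.comp E cF') :=
      (mhexl hC n p m).trans (mcomp mrfl ((mc _ _ _).trans (mc _ _ _).symm))
    have h2 : MEq C K' (C.comp A (C.c ((n + m) + p) (n + (p + m)) B)) := mc _ _ _
    calc (C.comp D K') ≋ C.comp (C.comp E cF') (C.comp A (C.c ((n + m) + p) (n + (p + m)) B)) :=
          mcomp h1 h2
      _ ≋ C.comp E (C.comp cF' (C.comp A (C.c ((n + m) + p) (n + (p + m)) B))) :=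
          MEq.ofEq (hM.comp_assoc _ _ _)
      _ ≋ C.comp E (C.comp (C.comp cF' A) (C.c ((n + m) + p) (n + (p + m)) B)) :=
          mcomp mrfl (MEq.ofEq (hM.comp_assoc _ _ _)).symm
      _ ≋ C.comp E B := mcomp mrfl ((mcomp_id_left hM hFA).trans (mc _ _ _))
      _ ≋ C.tensor (C.comp (C.id n) (C.id n)) (C.comp (γ p m) (γ m p)) :=
          MEq.ofEq (tcomp hC _ _ _ _)
      _ ≋ C.tensor (C.id n) (C.id (p + m)) :=
          mtensor (MEq.ofEq (hM.id_comp _)) (MEq.ofEq (hC.symmetry p m))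
      _ ≋ C.id (n + (p + m)) := MEq.ofEq (hM.tensor_id _ _)
      _ ≋ C.id ((n + p) + m) := mid (by omega)
  calc (γ m (n + p)) ≋ C.comp (γ m (n + p)) (C.comp D K') :=
        (mcomp_id_right hM hDK).symm
    _ ≋ C.comp (C.comp (γ m (n + p)) D) K' := MEq.ofEq (hM.comp_assoc _ _ _) |>.symm
    _ ≋ C.comp (C.id (m + (n + p))) K' := mcomp (MEq.ofEq (hC.symmetry m (n + p))) mrfl
    _ ≋ K' := MEq.ofEq (hM.id_comp _)
    _ ≋ K := mc _ _ _

end Derived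
section LmTools

/-- `Lm p f q = 1_p ⊗ f ⊗ 1_q`, left-associated. -/
def Lm (C : MonCatN) (p : ℕ) {a a' : ℕ} (f : C.Hom a a') (q : ℕ) :
    C.Hom ((p + a) + q) ((p + a') + q) :=
  C.tensor (C.tensor (C.id p) f) (C.id q)

variable {C : MonCatN} {γ : ∀ m n : ℕ, C.Hom (m + n) (n + m)}

theorem mγarg {a b a' b' : ℕ} (h1 : a = a') (h2 : b = b') :
    MEq C (γ a b) (γ a' b') := by subst h1; subst h2; exact mrfl

theorem Lm_comp (hC : IsStrictSymMon C γ) {p q a a' a'' : ℕ}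
    (f : C.Hom a a') (g : C.Hom a' a'') :
    C.comp (Lm C p f q) (Lm C p g q) = Lm C p (C.comp f g) q := by
  simp only [Lm, tcomp hC, hC.id_comp]

theorem Lm_id (hC : IsStrictSymMon C γ) (p a q : ℕ) :
    Lm C p (C.id a) q = C.id ((p + a) + q) := by
  simp only [Lm, hC.tensor_id]

theorem mLcongr {p q p' q' a a' c c' : ℕ} {f : C.Hom a a'} {g : C.Hom c c'}
    (h : MEq C f g) (h1 : p = p') (h2 : q = q') :
    MEq C (Lm C p f q) (Lm C p' g q') :=
  mtensor (mtensor (mid h1) h) (mid h2)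

theorem mLnest (hC : IsStrictSymMon C γ) (p p' : ℕ) {a a' : ℕ} (f : C.Hom a a')
    (q' q : ℕ) :
    MEq C (Lm C (p + p') f (q' + q)) (Lm C p (Lm C p' f q') q) := by
  calc (Lm C (p + p') f (q' + q))
      ≋ C.tensor (C.tensor (C.tensor (C.id p) (C.id p')) f)
          (C.tensor (C.id q') (C.id q)) :=
        mtensor (mtensor (MEq.ofEq (hC.tensor_id p p')).symm mrfl)
          (MEq.ofEq (hC.tensor_id q' q)).symm
    _ ≋ C.tensor (C.tensor (C.id p) (C.tensor (C.id p') f))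
          (C.tensor (C.id q') (C.id q)) :=
        mtensor (mtassoc hC _ _ _) mrfl
    _ ≋ C.tensor (C.tensor (C.tensor (C.id p) (C.tensor (C.id p') f)) (C.id q'))
          (C.id q) := (mtassoc hC _ _ _).symm
    _ ≋ Lm C p (Lm C p' f q') q :=
        mtensor (mtassoc hC _ _ _) mrfl

theorem mL0 (hC : IsStrictSymMon C γ) {a a' : ℕ} (f : C.Hom a a') :
    MEq C (Lm C 0 f 0) f := by
  have : Lm C 0 f 0 = C.tensor (C.id 0) f := hC.tensor_unit_r _
  rw [this]; exact munitl hC f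

/-- Disjoint blocks commute. -/
theorem mLdisj (hC : IsStrictSymMon C γ) (p q r : ℕ) {a a' b b' : ℕ}
    (f : C.Hom a a') (g : C.Hom b b') :
    MEq C
      (C.comp (Lm C p f (q + (b + r)))
        (C.c ((p + a') + (q + (b + r))) ((((p + a') + q) + b') + r)
          (Lm C ((p + a') + q) g r)))
      (C.comp (Lm C ((p + a) + q) g r)
        (C.c ((((p + a) + q) + b') + r) ((((p + a') + q) + b') + r)
          (Lm C p f (q + (b' + r))))) := by
  have hM := hC.toIsStrictMon
  let t5 : ∀ {x x' y y' : ℕ}, C.Hom x x' → C.Hom y y' →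
      C.Hom ((((p + x) + q) + y) + r) ((((p + x') + q) + y') + r) :=
    fun {x x' y y'} u v =>
      C.tensor (C.tensor (C.tensor (C.tensor (C.id p) u) (C.id q)) v) (C.id r)
  have ht5 : ∀ {x x' y y' : ℕ} (u : C.Hom x x') (v : C.Hom y y'),
      t5 u v = C.tensor (C.tensor (C.tensor (C.tensor (C.id p) u) (C.id q)) v) (C.id r) :=
    fun _ _ => rfl
  have merge : ∀ {x x' x'' y y' y'' : ℕ} (u : C.Hom x x') (u' : C.Hom x' x'')
      (v : C.Hom y y') (v' : C.Hom y' y''),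
      C.comp (t5 u v) (t5 u' v') = t5 (C.comp u u') (C.comp v v') := by
    intro x x' x'' y y' y'' u u' v v'
    simp only [ht5, tcomp hC, hM.id_comp]
  have F1 : ∀ {x x' : ℕ} (u : C.Hom x x') (y : ℕ),
      MEq C (Lm C p u (q + (y + r))) (t5 u (C.id y)) := by
    intro x x' u y
    have hq : MEq C (C.id (q + (y + r)))
        (C.tensor (C.id q) (C.tensor (C.id y) (C.id r))) := by
      rw [hM.tensor_id y r, hM.tensor_id q (y + r)]; exact mrfl
    calc (Lm C p u (q + (y + r)))
        ≋ C.tensor (C.tensor (C.id p) u) (C.tensor (C.id q) (C.tensor (C.id y) (C.id r))) :=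
          mtensor mrfl hq
      _ ≋ C.tensor (C.tensor (C.tensor (C.id p) u) (C.id q)) (C.tensor (C.id y) (C.id r)) :=
          (mtassoc hC _ _ _).symm
      _ ≋ t5 u (C.id y) := (mtassoc hC _ _ _).symm
  have F2 : ∀ {y y' : ℕ} (v : C.Hom y y') (x : ℕ),
      t5 (C.id x) v = Lm C ((p + x) + q) v r := by
    intro y y' v x
    simp only [ht5, Lm, hM.tensor_id]
  calc (C.comp (Lm C p f (q + (b + r)))
        (C.c ((p + a') + (q + (b + r))) ((((p + a') + q) + b') + r)
          (Lm C ((p + a') + q) g r)))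
      ≋ C.comp (t5 f (C.id b)) (t5 (C.id a') g) :=
        mcomp (F1 f b) ((mc _ _ _).trans (MEq.ofEq (F2 g a')).symm)
    _ ≋ t5 (C.comp f (C.id a')) (C.comp (C.id b) g) := MEq.ofEq (merge _ _ _ _)
    _ ≋ t5 (C.comp (C.id a) f) (C.comp g (C.id b')) := by
        rw [hM.comp_id, hM.id_comp, hM.id_comp, hM.comp_id]; exact mrfl
    _ ≋ C.comp (t5 (C.id a) g) (t5 f (C.id b')) := (MEq.ofEq (merge _ _ _ _)).symm
    _ ≋ C.comp (Lm C ((p + a) + q) g r)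
        (C.c ((((p + a) + q) + b') + r) ((((p + a') + q) + b') + r)
          (Lm C p f (q + (b' + r)))) :=
        mcomp (MEq.ofEq (F2 g a)) ((F1 f b').symm.trans (mc _ _ _).symm)

end LmTools
section NormalForms

variable {C : MonCatN} {γ : ∀ m n : ℕ, C.Hom (m + n) (n + m)}

theorem mT1r (hC : IsStrictSymMon C γ) {a a' : ℕ} (x : C.Hom a a') :
    MEq C (C.tensor x (C.id 1)) (Lm C 0 x 1) :=
  (mtensor (munitl hC x) mrfl).symm

theorem mT1r' (hC : IsStrictSymMon C γ) {a a' : ℕ} (x : C.Hom a a') (s : ℕ) :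
    MEq C (C.tensor x (C.id s)) (Lm C 0 x s) :=
  (mtensor (munitl hC x) mrfl).symm

theorem T1l (hC : IsStrictSymMon C γ) {a a' : ℕ} (s : ℕ) (x : C.Hom a a') :
    Lm C s x 0 = C.tensor (C.id s) x :=
  hC.tensor_unit_r _

/-- Composition under `Lm` through a cast. -/
theorem mLcomp2 (hC : IsStrictSymMon C γ) (p q : ℕ) {a b c d : ℕ}
    (x : C.Hom a b) (y : C.Hom c d) (h : b = c) :
    MEq C
      (C.comp (Lm C p x q)
        (C.c ((p + b) + q) ((p + d) + q) (Lm C p y q) (by rw [h]) rfl))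
      (Lm C p (C.comp x (C.c b d y h.symm rfl)) q) := by
  subst h
  exact MEq.ofEq (Lm_comp hC x y)

theorem mGdi (hC : IsStrictSymMon C γ) (m i s : ℕ) (h : m = i + s) :
    MEq C (Gdi C γ m i) (Lm C i (γ 1 1) s) := by
  unfold Gdi
  rw [dif_pos (by omega : i ≤ m)]
  exact (mcst _ _ _).trans (mLcongr mrfl rfl (by omega))

variable {P : PoalgebraIn C γ}

theorem mWd (hC : IsStrictSymMon C γ) (m j t : ℕ) (h : m = j + (t + 1)) :
    MEq C (Wd C γ P m j)
      (C.comp (Lm C j P.δ (t + 1))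
        (C.comp
          (C.c ((j + 2) + (t + 1)) (((j + (t + 1)) + 2) + 0)
            (Lm C (j + 1) (γ 1 t) 1) (by omega) (by omega))
          (Lm C (j + (t + 1)) P.μ 0))) := by
  unfold Wd
  rw [dif_pos (by omega : j < m)]
  refine mcomp ?_ (mcomp ?_ ?_)
  · exact (mcst _ _ _).trans
      (((mtassoc hC (C.id j) P.δ (C.id (m - j))).symm).trans
        (mtensor mrfl (mid (by omega))))
  · refine (mcst _ _ _).trans (MEq.trans ?_ (mc _ _ _).symm)
    exact ((mtassoc hC (C.id (j + 1)) (γ 1 (m - j - 1)) (C.id 1)).symm).trans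
      (mtensor (mtensor mrfl (mγarg rfl (by omega))) mrfl)
  · exact (MEq.ofEq (T1l hC m P.μ)).symm.trans (mLcongr mrfl (by omega) rfl)

/-- `G` commutes with `H = id ⊗ η`. -/
theorem Hstep (hC : IsStrictSymMon C γ) (n i : ℕ) (hi : i ≤ n) :
    C.comp (Gdi C γ n i) (Hd C γ P (n + 2)) =
      C.comp (Hd C γ P (n + 2)) (Gdi C γ (n + 1) i) := by
  refine MEq.eq ?_
  have hd : MEq C (Hd C γ P (n + 2)) (Lm C ((i + 2) + (n - i)) P.η 0) := by
    unfold Hd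
    exact (MEq.ofEq (T1l hC (n + 2) P.η)).symm.trans (mLcongr mrfl (by omega) rfl)
  calc (C.comp (Gdi C γ n i) (Hd C γ P (n + 2)))
      ≋ C.comp (Lm C i (γ 1 1) ((n - i) + (0 + 0)))
          (C.c ((i + 2) + ((n - i) + (0 + 0))) ((((i + 2) + (n - i)) + 1) + 0)
            (Lm C ((i + 2) + (n - i)) P.η 0)) :=
        mcomp ((mGdi hC n i (n - i) (by omega)).trans (mLcongr mrfl rfl (by omega)))
          (hd.trans (mc _ _ _).symm)
    _ ≋ C.comp (Lm C ((i + 2) + (n - i)) P.η 0)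
          (C.c ((((i + 2) + (n - i)) + 1) + 0) ((((i + 2) + (n - i)) + 1) + 0)
            (Lm C i (γ 1 1) ((n - i) + (1 + 0)))) :=
        mLdisj hC i (n - i) 0 (γ 1 1) P.η
    _ ≋ C.comp (Hd C γ P (n + 2)) (Gdi C γ (n + 1) i) := by
        refine mcomp ?_ ?_
        · exact ((MEq.ofEq (T1l hC (n + 2) P.η)).symm.trans
            (mLcongr mrfl (by omega) rfl)).symm
        · exact (mc _ _ _).trans
            ((mLcongr mrfl rfl (by omega)).trans
              (mGdi hC (n + 1) i ((n - i) + 1) (by omega)).symm)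

/-- `G` commutes with `S = id ⊗ σ`. -/
theorem Sstep (hC : IsStrictSymMon C γ) (n i : ℕ) (hi : i ≤ n) :
    C.comp (Gdi C γ (n + 1) i) (Sd C γ P (n + 2)) =
      C.comp (Sd C γ P (n + 2)) (Gdi C γ (n + 1) i) := by
  refine MEq.eq ?_
  have hd : MEq C (Sd C γ P (n + 2)) (Lm C ((i + 2) + (n - i)) P.σ 0) := by
    unfold Sd
    exact (MEq.ofEq (T1l hC (n + 2) P.σ)).symm.trans (mLcongr mrfl (by omega) rfl)
  calc (C.comp (Gdi C γ (n + 1) i) (Sd C γ P (n + 2)))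
      ≋ C.comp (Lm C i (γ 1 1) ((n - i) + (1 + 0)))
          (C.c ((i + 2) + ((n - i) + (1 + 0))) ((((i + 2) + (n - i)) + 1) + 0)
            (Lm C ((i + 2) + (n - i)) P.σ 0)) :=
        mcomp ((mGdi hC (n + 1) i ((n - i) + 1) (by omega)).trans
          (mLcongr mrfl rfl (by omega)))
          (hd.trans (mc _ _ _).symm)
    _ ≋ C.comp (Lm C ((i + 2) + (n - i)) P.σ 0)
          (C.c ((((i + 2) + (n - i)) + 1) + 0) ((((i + 2) + (n - i)) + 1) + 0)
            (Lm C i (γ 1 1) ((n - i) + (1 + 0)))) :=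
        mLdisj hC i (n - i) 0 (γ 1 1) P.σ
    _ ≋ C.comp (Sd C γ P (n + 2)) (Gdi C γ (n + 1) i) := by
        refine mcomp ?_ ?_
        · exact ((MEq.ofEq (T1l hC (n + 2) P.σ)).symm.trans
            (mLcongr mrfl (by omega) rfl)).symm
        · exact (mc _ _ _).trans
            ((mLcongr mrfl rfl (by omega)).trans
              (mGdi hC (n + 1) i ((n - i) + 1) (by omega)).symm)

end NormalForms
section Ladder

variable {C : MonCatN} {γ : ∀ m n : ℕ, C.Hom (m + n) (n + m)}

theorem mladder (hM : IsStrictMon C) {a b c d e f g h : ℕ}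
    (G : C.Hom a b) (X1 : C.Hom b c) (X2 : C.Hom c d) (X3 : C.Hom d e)
    (X1' : C.Hom a f) (G1 : C.Hom f c) (X2' : C.Hom f g) (G2 : C.Hom g d)
    (X3' : C.Hom g h) (G3 : C.Hom h e)
    (h1 : C.comp G X1 = C.comp X1' G1)
    (h2 : C.comp G1 X2 = C.comp X2' G2)
    (h3 : C.comp G2 X3 = C.comp X3' G3) :
    C.comp G (C.comp X1 (C.comp X2 X3)) =
      C.comp (C.comp X1' (C.comp X2' X3')) G3 := by
  calc C.comp G (C.comp X1 (C.comp X2 X3))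
      = C.comp (C.comp G X1) (C.comp X2 X3) := (hM.comp_assoc _ _ _).symm
    _ = C.comp (C.comp X1' G1) (C.comp X2 X3) := by rw [h1]
    _ = C.comp X1' (C.comp (C.comp G1 X2) X3) := by
        simp only [hM.comp_assoc]
    _ = C.comp X1' (C.comp (C.comp X2' G2) X3) := by rw [h2]
    _ = C.comp X1' (C.comp X2' (C.comp G2 X3)) := by rw [hM.comp_assoc]
    _ = C.comp X1' (C.comp X2' (C.comp X3' G3)) := by rw [h3]
    _ = C.comp (C.comp X1' (C.comp X2' X3')) G3 := by
        rw [hM.comp_assoc, hM.comp_assoc]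

/-- Casted disjoint-block exchange, with flexible index shapes. -/
theorem cdisj (hC : IsStrictSymMon C γ) {S U T V : ℕ} (p q r : ℕ)
    {a a' b b' : ℕ} (f : C.Hom a a') (g : C.Hom b b')
    {p1 q1 p2 r2 p3 r3 p4 q4 : ℕ}
    (e1 : p1 = p) (e2 : q1 = q + (b + r)) (e3 : p2 = (p + a') + q) (e4 : r2 = r)
    (e5 : p3 = (p + a) + q) (e6 : r3 = r) (e7 : p4 = p) (e8 : q4 = q + (b' + r))
    {h1 : (p1 + a) + q1 = S} {h2 : (p1 + a') + q1 = U}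
    {h3 : (p2 + b) + r2 = U} {h4 : (p2 + b') + r2 = T}
    {h5 : (p3 + b) + r3 = S} {h6 : (p3 + b') + r3 = V}
    {h7 : (p4 + a) + q4 = V} {h8 : (p4 + a') + q4 = T} :
    C.comp (C.c S U (Lm C p1 f q1) h1 h2) (C.c U T (Lm C p2 g r2) h3 h4) =
      C.comp (C.c S V (Lm C p3 g r3) h5 h6) (C.c V T (Lm C p4 f q4) h7 h8) := by
  have base := mLdisj hC p q r f g
  have hA : MEq C (C.c S U (Lm C p1 f q1) h1 h2) (Lm C p f (q + (b + r))) :=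
    (mc _ _ _).trans (mLcongr mrfl e1 e2)
  have hB : MEq C (C.c U T (Lm C p2 g r2) h3 h4)
      (C.c ((p + a') + (q + (b + r))) ((((p + a') + q) + b') + r)
        (Lm C ((p + a') + q) g r)) :=
    ((mc _ _ _).trans (mLcongr mrfl e3 e4)).trans (mc _ _ _).symm
  have hD : MEq C (Lm C ((p + a) + q) g r)
      (C.c S V (Lm C p3 g r3) h5 h6) :=
    ((mLcongr mrfl e5 e6).symm).trans (mc _ _ _).symm
  have hE : MEq C
      (C.c ((((p + a) + q) + b') + r) ((((p + a') + q) + b') + r)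
        (Lm C p f (q + (b' + r))))
      (C.c V T (Lm C p4 f q4) h7 h8) :=
    ((mc _ _ _).trans ((mLcongr mrfl e7 e8).symm)).trans (mc _ _ _).symm
  exact MEq.eq ((mcomp hA hB).trans (base.trans (mcomp hD hE)))

variable {P : PoalgebraIn C γ}

/-- pointwise case `i + 1 < j`. -/
theorem pw_gt (hC : IsStrictSymMon C γ) (n i j : ℕ) (hij : i + 1 < j)
    (hj : j < n + 2) :
    C.comp (Gdi C γ (n + 1) i) (Wd C γ P (n + 2) j) =
      C.comp (Wd C γ P (n + 2) j) (Gdi C γ (n + 1) i) := by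
  have hM := hC.toIsStrictMon
  obtain ⟨u, hu⟩ : ∃ u, j = (i + 2) + u := ⟨j - i - 2, by omega⟩
  obtain ⟨w, hw⟩ : ∃ w, n + 2 = j + (w + 1) := ⟨n + 1 - j, by omega⟩
  set S1 := (n + 1) + 2 with hS1
  set S2 := ((n + 1) + 2) + 1 with hS2
  -- exchange-shaped factors at aligned boundaries
  set Y1 := C.c S1 S2 (Lm C ((i + 2) + u) P.δ (w + 1)) (by omega) (by omega) with hY1
  set Y2 := C.c S2 S2 (Lm C (((i + 2) + u) + 1) (γ 1 w) 1) (by omega) (by omega) with hY2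
  set Y3 := C.c S2 S1 (Lm C ((i + 2) + (u + (1 + w))) P.μ 0) (by omega) (by omega) with hY3
  set G0 := C.c S1 S1 (Lm C i (γ 1 1) (u + (1 + (w + 1)))) (by omega) (by omega) with hG0
  set G1 := C.c S2 S2 (Lm C i (γ 1 1) (u + (2 + (w + 1)))) (by omega) (by omega) with hG1
  set G2 := C.c S2 S2 (Lm C i (γ 1 1) ((u + 1) + ((w + 1) + 1))) (by omega) (by omega) with hG2
  set G3 := C.c S1 S1 (Lm C i (γ 1 1) ((u + (1 + w)) + (1 + 0))) (by omega) (by omega) with hG3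
  have hGdi : MEq C (Gdi C γ (n + 1) i) G0 := by
    rw [hG0]
    exact ((mGdi hC (n + 1) i ((n - i) + 1) (by omega)).trans
      (mLcongr mrfl rfl (by omega))).trans (mc _ _ _).symm
  have hGdi' : MEq C G3 (Gdi C γ (n + 1) i) := by
    rw [hG3]
    exact ((mc _ _ _).trans (mLcongr mrfl rfl (by omega))).trans
      (mGdi hC (n + 1) i ((n - i) + 1) (by omega)).symm
  have hWd : MEq C (Wd C γ P (n + 2) j) (C.comp Y1 (C.comp Y2 Y3)) := by
    rw [hY1, hY2, hY3]
    refine (mWd hC (n + 2) j w hw).trans (mcomp ?_ (mcomp ?_ ?_))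
    · exact (mLcongr mrfl (by omega) rfl).trans (mc _ _ _).symm
    · exact ((mc _ _ _).trans (mLcongr mrfl (by omega) rfl)).trans (mc _ _ _).symm
    · exact (mLcongr mrfl (by omega) rfl).trans (mc _ _ _).symm
  have h1 : C.comp G0 Y1 = C.comp Y1 G1 := by
    rw [hG0, hY1, hG1]
    exact cdisj hC i u (w + 1) (γ 1 1) P.δ rfl rfl (by omega) rfl
      (by omega) rfl rfl rfl
  have h2 : C.comp G1 Y2 = C.comp Y2 G2 := by
    rw [hG1, hY2, hG2]
    exact cdisj hC i (u + 1) 1 (γ 1 1) (γ 1 w) rfl (by omega) (by omega) rfl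
      (by omega) rfl rfl rfl
  have h3 : C.comp G2 Y3 = C.comp Y3 G3 := by
    rw [hG2, hY3, hG3]
    exact cdisj hC i (u + (1 + w)) 0 (γ 1 1) P.μ rfl (by omega) (by omega) rfl
      (by omega) rfl rfl rfl
  refine MEq.eq ?_
  calc (C.comp (Gdi C γ (n + 1) i) (Wd C γ P (n + 2) j))
      ≋ C.comp G0 (C.comp Y1 (C.comp Y2 Y3)) := mcomp hGdi hWd
    _ ≋ C.comp (C.comp Y1 (C.comp Y2 Y3)) G3 :=
        MEq.ofEq (mladder hM G0 Y1 Y2 Y3 Y1 G1 Y2 G2 Y3 G3 h1 h2 h3)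
    _ ≋ C.comp (Wd C γ P (n + 2) j) (Gdi C γ (n + 1) i) := mcomp hWd.symm hGdi'

end Ladder
section PwLt

variable {C : MonCatN} {γ : ∀ m n : ℕ, C.Hom (m + n) (n + m)} {P : PoalgebraIn C γ}

/-- pointwise case `j < i`. -/
theorem pw_lt (hC : IsStrictSymMon C γ) (n i j : ℕ) (hij : j < i) (hi : i ≤ n) :
    C.comp (Gdi C γ (n + 1) i) (Wd C γ P (n + 2) j) =
      C.comp (Wd C γ P (n + 2) j) (Gdi C γ (n + 1) i) := by
  have hM := hC.toIsStrictMon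
  obtain ⟨u, hu⟩ : ∃ u, i = (j + 1) + u := ⟨i - j - 1, by omega⟩
  obtain ⟨v, hv⟩ : ∃ v, n = i + v := ⟨n - i, by omega⟩
  set S1 := (n + 1) + 2 with hS1
  set S2 := ((n + 1) + 2) + 1 with hS2
  set x := Lm C u (γ 1 1) v with hx
  set Y1 := C.c S1 S2 (Lm C j P.δ (u + (2 + (v + 1)))) (by omega) (by omega) with hY1
  set Y2 := C.c S2 S2 (Lm C (j + 1) (γ 1 ((u + 2) + v)) 1) (by omega) (by omega) with hY2
  set Y3 := C.c S2 S1 (Lm C ((((j + 1) + u) + 2) + v) P.μ 0) (by omega) (by omega) with hY3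
  set G0 := C.c S1 S1 (Lm C ((j + 1) + u) (γ 1 1) (v + 1)) (by omega) (by omega) with hG0
  set G1 := C.c S2 S2 (Lm C ((j + 2) + u) (γ 1 1) (v + 1)) (by omega) (by omega) with hG1
  set G2 := C.c S2 S2 (Lm C ((j + 1) + u) (γ 1 1) (v + 2)) (by omega) (by omega) with hG2
  have hGdi : MEq C (Gdi C γ (n + 1) i) G0 := by
    rw [hG0]
    exact ((mGdi hC (n + 1) i (v + 1) (by omega)).trans
      (mLcongr mrfl (by omega) rfl)).trans (mc _ _ _).symm
  have hWd : MEq C (Wd C γ P (n + 2) j) (C.comp Y1 (C.comp Y2 Y3)) := by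
    rw [hY1, hY2, hY3]
    refine (mWd hC (n + 2) j ((u + 2) + v) (by omega)).trans (mcomp ?_ (mcomp ?_ ?_))
    · exact (mLcongr mrfl rfl (by omega)).trans (mc _ _ _).symm
    · exact ((mc _ _ _).trans (mLcongr mrfl rfl rfl)).trans (mc _ _ _).symm
    · exact (mLcongr mrfl (by omega) rfl).trans (mc _ _ _).symm
  have h1 : C.comp G0 Y1 = C.comp Y1 G1 := by
    rw [hG0, hY1, hG1]
    exact (cdisj hC j u (v + 1) P.δ (γ 1 1) rfl rfl (by omega) rfl
      (by omega) rfl rfl rfl).symm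
  have h2 : C.comp G1 Y2 = C.comp Y2 G2 := by
    have hnat : C.comp (C.tensor (C.id 1) x) (γ 1 ((u + 2) + v)) =
        C.comp (γ 1 ((u + 2) + v)) (C.tensor x (C.id 1)) :=
      hC.braiding_natural (C.id 1) x
    have e1 : MEq C G1 (Lm C (j + 1) (C.tensor (C.id 1) x) 1) := by
      rw [hG1]
      calc (C.c S2 S2 (Lm C ((j + 2) + u) (γ 1 1) (v + 1)) (by omega) (by omega))
          ≋ Lm C ((j + 2) + u) (γ 1 1) (v + 1) := mc _ _ _
        _ ≋ Lm C (((j + 1) + 1) + u) (γ 1 1) (v + (0 + 1)) :=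
            mLcongr mrfl (by omega) (by omega)
        _ ≋ Lm C ((j + 1) + 1) (Lm C u (γ 1 1) v) (0 + 1) :=
            mLnest hC ((j + 1) + 1) u (γ 1 1) v (0 + 1)
        _ ≋ Lm C (j + 1) (Lm C 1 x 0) 1 := mLnest hC (j + 1) 1 x 0 1
        _ ≋ Lm C (j + 1) (C.tensor (C.id 1) x) 1 :=
            mLcongr (MEq.ofEq (T1l hC 1 x)) rfl rfl
    have e3 : MEq C (Lm C (j + 1) (C.tensor x (C.id 1)) 1) G2 := by
      rw [hG2]
      calc (Lm C (j + 1) (C.tensor x (C.id 1)) 1)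
          ≋ Lm C (j + 1) (Lm C 0 x 1) 1 := mLcongr (mT1r hC x) rfl rfl
        _ ≋ Lm C ((j + 1) + 0) x (1 + 1) := (mLnest hC (j + 1) 0 x 1 1).symm
        _ ≋ Lm C (((j + 1) + 0) + u) (γ 1 1) (v + (1 + 1)) :=
            (mLnest hC ((j + 1) + 0) u (γ 1 1) v (1 + 1)).symm
        _ ≋ Lm C ((j + 1) + u) (γ 1 1) (v + 2) := mLcongr mrfl (by omega) (by omega)
        _ ≋ C.c S2 S2 (Lm C ((j + 1) + u) (γ 1 1) (v + 2)) (by omega) (by omega) :=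
            (mc _ _ _).symm
    refine MEq.eq ?_
    calc (C.comp G1 Y2)
        ≋ C.comp (Lm C (j + 1) (C.tensor (C.id 1) x) 1)
            (Lm C (j + 1) (γ 1 ((u + 2) + v)) 1) := mcomp e1 (mc _ _ _)
      _ ≋ Lm C (j + 1) (C.comp (C.tensor (C.id 1) x) (γ 1 ((u + 2) + v))) 1 :=
          MEq.ofEq (Lm_comp hC _ _)
      _ ≋ Lm C (j + 1) (C.comp (γ 1 ((u + 2) + v)) (C.tensor x (C.id 1))) 1 := by
          rw [hnat]; exact mrfl
      _ ≋ C.comp (Lm C (j + 1) (γ 1 ((u + 2) + v)) 1)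
            (Lm C (j + 1) (C.tensor x (C.id 1)) 1) :=
          (MEq.ofEq (Lm_comp hC _ _)).symm
      _ ≋ C.comp Y2 G2 := mcomp (mc _ _ _).symm e3
  have h3 : C.comp G2 Y3 = C.comp Y3 G0 := by
    rw [hG2, hY3, hG0]
    exact cdisj hC ((j + 1) + u) v 0 (γ 1 1) P.μ rfl (by omega) (by omega) rfl
      (by omega) rfl rfl (by omega)
  refine MEq.eq ?_
  calc (C.comp (Gdi C γ (n + 1) i) (Wd C γ P (n + 2) j))
      ≋ C.comp G0 (C.comp Y1 (C.comp Y2 Y3)) := mcomp hGdi hWd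
    _ ≋ C.comp (C.comp Y1 (C.comp Y2 Y3)) G0 :=
        MEq.ofEq (mladder hM G0 Y1 Y2 Y3 Y1 G1 Y2 G2 Y3 G0 h1 h2 h3)
    _ ≋ C.comp (Wd C γ P (n + 2) j) (Gdi C γ (n + 1) i) := mcomp hWd.symm hGdi.symm

end PwLt
section PwEq

variable {C : MonCatN} {γ : ∀ m n : ℕ, C.Hom (m + n) (n + m)} {P : PoalgebraIn C γ}

/-- pointwise case `j = i`. -/
theorem pw_eq (hC : IsStrictSymMon C γ) (n i : ℕ) (hi : i ≤ n) :
    C.comp (Gdi C γ (n + 1) i) (Wd C γ P (n + 2) i) =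
      C.comp (Wd C γ P (n + 2) (i + 1)) (Gdi C γ (n + 1) i) := by
  have hM := hC.toIsStrictMon
  obtain ⟨v, hv⟩ : ∃ v, n = i + v := ⟨n - i, by omega⟩
  set S1 := (n + 1) + 2 with hS1
  set S2 := ((n + 1) + 2) + 1 with hS2
  set YA1 := C.c S1 S2 (Lm C i P.δ (v + 2)) (by omega) (by omega) with hYA1
  set YA2 := C.c S2 S2 (Lm C (i + 1) (γ 1 (v + 1)) 1) (by omega) (by omega) with hYA2
  set YA3 := C.c S2 S1 (Lm C ((i + 2) + v) P.μ 0) (by omega) (by omega) with hYA3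
  set YB1 := C.c S1 S2 (Lm C (i + 1) P.δ (v + 1)) (by omega) (by omega) with hYB1
  set YB2 := C.c S2 S2 (Lm C (i + 2) (γ 1 v) 1) (by omega) (by omega) with hYB2
  set G0 := C.c S1 S1 (Lm C i (γ 1 1) (v + 1)) (by omega) (by omega) with hG0
  set G1 := C.c S2 S2 (Lm C i (γ 1 2) (v + 1)) (by omega) (by omega) with hG1
  set G2 := C.c S2 S2 (Lm C i (γ 1 1) (v + 2)) (by omega) (by omega) with hG2
  have hGdi : MEq C (Gdi C γ (n + 1) i) G0 := by
    rw [hG0]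
    exact ((mGdi hC (n + 1) i (v + 1) (by omega)).trans
      (mLcongr mrfl rfl rfl)).trans (mc _ _ _).symm
  have hWdA : MEq C (Wd C γ P (n + 2) i) (C.comp YA1 (C.comp YA2 YA3)) := by
    rw [hYA1, hYA2, hYA3]
    refine (mWd hC (n + 2) i (v + 1) (by omega)).trans (mcomp ?_ (mcomp ?_ ?_))
    · exact (mLcongr mrfl rfl (by omega)).trans (mc _ _ _).symm
    · exact ((mc _ _ _).trans (mLcongr mrfl rfl rfl)).trans (mc _ _ _).symm
    · exact (mLcongr mrfl (by omega) rfl).trans (mc _ _ _).symm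
  have hWdB : MEq C (Wd C γ P (n + 2) (i + 1)) (C.comp YB1 (C.comp YB2 YA3)) := by
    rw [hYB1, hYB2, hYA3]
    refine (mWd hC (n + 2) (i + 1) v (by omega)).trans (mcomp ?_ (mcomp ?_ ?_))
    · exact (mLcongr mrfl rfl rfl).trans (mc _ _ _).symm
    · exact ((mc _ _ _).trans (mLcongr mrfl (by omega) rfl)).trans (mc _ _ _).symm
    · exact (mLcongr mrfl (by omega) rfl).trans (mc _ _ _).symm
  have h1 : C.comp G0 YA1 = C.comp YB1 G1 := by
    have eA : MEq C YA1 (Lm C i (C.tensor P.δ (C.id 1)) (v + 1)) := by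
      rw [hYA1]
      calc (C.c S1 S2 (Lm C i P.δ (v + 2)) (by omega) (by omega))
          ≋ Lm C i P.δ (v + 2) := mc _ _ _
        _ ≋ Lm C (i + 0) P.δ (1 + (v + 1)) := mLcongr mrfl (by omega) (by omega)
        _ ≋ Lm C i (Lm C 0 P.δ 1) (v + 1) := mLnest hC i 0 P.δ 1 (v + 1)
        _ ≋ Lm C i (C.tensor P.δ (C.id 1)) (v + 1) :=
            mLcongr (mT1r hC P.δ).symm rfl rfl
    have eB : MEq C (Lm C i (C.tensor (C.id 1) P.δ) (v + 1)) YB1 := by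
      rw [hYB1]
      calc (Lm C i (C.tensor (C.id 1) P.δ) (v + 1))
          ≋ Lm C i (Lm C 1 P.δ 0) (v + 1) :=
            mLcongr (MEq.ofEq (T1l hC 1 P.δ)).symm rfl rfl
        _ ≋ Lm C (i + 1) P.δ (0 + (v + 1)) := (mLnest hC i 1 P.δ 0 (v + 1)).symm
        _ ≋ Lm C (i + 1) P.δ (v + 1) := mLcongr mrfl rfl (by omega)
        _ ≋ C.c S1 S2 (Lm C (i + 1) P.δ (v + 1)) (by omega) (by omega) := (mc _ _ _).symm
    refine MEq.eq ?_
    calc (C.comp G0 YA1)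
        ≋ C.comp (Lm C i (γ 1 1) (v + 1)) (Lm C i (C.tensor P.δ (C.id 1)) (v + 1)) := by
          rw [hG0]; exact mcomp (mc _ _ _) eA
      _ ≋ Lm C i (C.comp (γ 1 1) (C.tensor P.δ (C.id 1))) (v + 1) :=
          MEq.ofEq (Lm_comp hC _ _)
      _ ≋ Lm C i (C.comp (C.tensor (C.id 1) P.δ) (γ 1 2)) (v + 1) := by
          rw [hC.braiding_natural (C.id 1) P.δ]; exact mrfl
      _ ≋ C.comp (Lm C i (C.tensor (C.id 1) P.δ) (v + 1)) (Lm C i (γ 1 2) (v + 1)) :=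
          (MEq.ofEq (Lm_comp hC _ _)).symm
      _ ≋ C.comp YB1 G1 := by rw [hG1]; exact mcomp eB (mc _ _ _).symm
  have h2 : C.comp G1 YA2 = C.comp YB2 G2 := by
    set K1 := C.c S2 S2 (Lm C i (C.tensor (γ 1 1) (C.id 1)) (v + 1))
      (by omega) (by omega) with hK1
    set K2 := C.c S2 S2 (Lm C i (C.tensor (C.id 1) (γ 1 1)) (v + 1))
      (by omega) (by omega) with hK2
    set K3 := C.c S2 S2 (Lm C (i + 1) (C.tensor (γ 1 1) (C.id v)) 1)
      (by omega) (by omega) with hK3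
    set K4 := C.c S2 S2 (Lm C (i + 1) (C.tensor (C.id 1) (γ 1 v)) 1)
      (by omega) (by omega) with hK4
    set K1' := C.c S2 S2 (Lm C i (γ 1 1) (1 + (v + 1))) (by omega) (by omega) with hK1'
    have c1 : MEq C G1 (C.comp K1 K2) := by
      rw [hG1, hK1, hK2]
      calc (C.c S2 S2 (Lm C i (γ 1 2) (v + 1)) (by omega) (by omega))
          ≋ Lm C i (γ 1 2) (v + 1) := mc _ _ _
        _ ≋ Lm C i
              (C.comp (C.tensor (γ 1 1) (C.id 1))
                (C.c ((1 + 1) + 1) (1 + (1 + 1)) (C.tensor (C.id 1) (γ 1 1)))) (v + 1) :=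
            mLcongr (mhexr hC 1 1 1) rfl rfl
        _ ≋ C.comp (Lm C i (C.tensor (γ 1 1) (C.id 1)) (v + 1))
              (C.c ((i + ((1 + 1) + 1)) + (v + 1)) ((i + (1 + (1 + 1))) + (v + 1))
                (Lm C i (C.tensor (C.id 1) (γ 1 1)) (v + 1)) (by omega) rfl) :=
            (mLcomp2 hC i (v + 1) (C.tensor (γ 1 1) (C.id 1))
              (C.tensor (C.id 1) (γ 1 1)) (by omega)).symm
        _ ≋ C.comp (C.c S2 S2 (Lm C i (C.tensor (γ 1 1) (C.id 1)) (v + 1))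
              (by omega) (by omega))
              (C.c S2 S2 (Lm C i (C.tensor (C.id 1) (γ 1 1)) (v + 1))
              (by omega) (by omega)) :=
            mcomp (mc _ _ _).symm ((mc _ _ _).trans (mc _ _ _).symm)
    have c2 : MEq C YA2 (C.comp K3 K4) := by
      rw [hYA2, hK3, hK4]
      calc (C.c S2 S2 (Lm C (i + 1) (γ 1 (v + 1)) 1) (by omega) (by omega))
          ≋ Lm C (i + 1) (γ 1 (v + 1)) 1 := mc _ _ _
        _ ≋ Lm C (i + 1) (γ 1 (1 + v)) 1 := mLcongr (mγarg rfl (by omega)) rfl rfl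
        _ ≋ Lm C (i + 1)
              (C.comp (C.tensor (γ 1 1) (C.id v))
                (C.c ((1 + 1) + v) (1 + (v + 1)) (C.tensor (C.id 1) (γ 1 v)))) 1 :=
            mLcongr (mhexr hC 1 1 v) rfl rfl
        _ ≋ C.comp (Lm C (i + 1) (C.tensor (γ 1 1) (C.id v)) 1)
              (C.c (((i + 1) + ((1 + 1) + v)) + 1) (((i + 1) + (1 + (v + 1))) + 1)
                (Lm C (i + 1) (C.tensor (C.id 1) (γ 1 v)) 1) (by omega) rfl) :=
            (mLcomp2 hC (i + 1) 1 (C.tensor (γ 1 1) (C.id v))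
              (C.tensor (C.id 1) (γ 1 v)) (by omega)).symm
        _ ≋ C.comp (C.c S2 S2 (Lm C (i + 1) (C.tensor (γ 1 1) (C.id v)) 1)
              (by omega) (by omega))
              (C.c S2 S2 (Lm C (i + 1) (C.tensor (C.id 1) (γ 1 v)) 1)
              (by omega) (by omega)) :=
            mcomp (mc _ _ _).symm ((mc _ _ _).trans (mc _ _ _).symm)
    have c3 : C.comp K2 K3 = C.id S2 := by
      refine MEq.eq ?_
      have e2 : MEq C K2 (Lm C (i + 1) (γ 1 1) (0 + (v + 1))) := by
        rw [hK2]
        calc (C.c S2 S2 (Lm C i (C.tensor (C.id 1) (γ 1 1)) (v + 1)) (by omega) (by omega))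
            ≋ Lm C i (C.tensor (C.id 1) (γ 1 1)) (v + 1) := mc _ _ _
          _ ≋ Lm C i (Lm C 1 (γ 1 1) 0) (v + 1) :=
              mLcongr (MEq.ofEq (T1l hC 1 (γ 1 1))).symm rfl rfl
          _ ≋ Lm C (i + 1) (γ 1 1) (0 + (v + 1)) := (mLnest hC i 1 (γ 1 1) 0 (v + 1)).symm
      have e3 : MEq C K3 (Lm C (i + 1) (γ 1 1) (0 + (v + 1))) := by
        rw [hK3]
        calc (C.c S2 S2 (Lm C (i + 1) (C.tensor (γ 1 1) (C.id v)) 1) (by omega) (by omega))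
            ≋ Lm C (i + 1) (C.tensor (γ 1 1) (C.id v)) 1 := mc _ _ _
          _ ≋ Lm C (i + 1) (Lm C 0 (γ 1 1) v) 1 := mLcongr (mT1r' hC (γ 1 1) v) rfl rfl
          _ ≋ Lm C ((i + 1) + 0) (γ 1 1) (v + 1) := (mLnest hC (i + 1) 0 (γ 1 1) v 1).symm
          _ ≋ Lm C (i + 1) (γ 1 1) (0 + (v + 1)) := mLcongr mrfl (by omega) (by omega)
      calc (C.comp K2 K3)
          ≋ C.comp (Lm C (i + 1) (γ 1 1) (0 + (v + 1)))
              (Lm C (i + 1) (γ 1 1) (0 + (v + 1))) := mcomp e2 e3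
        _ ≋ Lm C (i + 1) (C.comp (γ 1 1) (γ 1 1)) (0 + (v + 1)) :=
            MEq.ofEq (Lm_comp hC _ _)
        _ ≋ Lm C (i + 1) (C.id (1 + 1)) (0 + (v + 1)) := by
            rw [hC.symmetry 1 1]; exact mrfl
        _ ≋ C.id (((i + 1) + (1 + 1)) + (0 + (v + 1))) := MEq.ofEq (Lm_id hC _ _ _)
        _ ≋ C.id S2 := mid (by omega)
    have hK1K1' : K1 = K1' := by
      rw [hK1, hK1']
      refine MEq.eq ?_
      calc (C.c S2 S2 (Lm C i (C.tensor (γ 1 1) (C.id 1)) (v + 1)) (by omega) (by omega))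
          ≋ Lm C i (C.tensor (γ 1 1) (C.id 1)) (v + 1) := mc _ _ _
        _ ≋ Lm C i (Lm C 0 (γ 1 1) 1) (v + 1) := mLcongr (mT1r hC (γ 1 1)) rfl rfl
        _ ≋ Lm C (i + 0) (γ 1 1) (1 + (v + 1)) := (mLnest hC i 0 (γ 1 1) 1 (v + 1)).symm
        _ ≋ Lm C i (γ 1 1) (1 + (v + 1)) := mLcongr mrfl (by omega) rfl
        _ ≋ C.c S2 S2 (Lm C i (γ 1 1) (1 + (v + 1))) (by omega) (by omega) := (mc _ _ _).symm
    have hK4B : K4 = YB2 := by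
      rw [hK4, hYB2]
      refine MEq.eq ?_
      calc (C.c S2 S2 (Lm C (i + 1) (C.tensor (C.id 1) (γ 1 v)) 1) (by omega) (by omega))
          ≋ Lm C (i + 1) (C.tensor (C.id 1) (γ 1 v)) 1 := mc _ _ _
        _ ≋ Lm C (i + 1) (Lm C 1 (γ 1 v) 0) 1 :=
            mLcongr (MEq.ofEq (T1l hC 1 (γ 1 v))).symm rfl rfl
        _ ≋ Lm C ((i + 1) + 1) (γ 1 v) (0 + 1) := (mLnest hC (i + 1) 1 (γ 1 v) 0 1).symm
        _ ≋ Lm C (i + 2) (γ 1 v) 1 := mLcongr mrfl (by omega) (by omega)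
        _ ≋ C.c S2 S2 (Lm C (i + 2) (γ 1 v) 1) (by omega) (by omega) := (mc _ _ _).symm
    have hex : C.comp K1' YB2 = C.comp YB2 G2 := by
      rw [hK1', hYB2, hG2]
      exact cdisj hC i 0 1 (γ 1 1) (γ 1 v) rfl (by omega) (by omega) rfl
        (by omega) rfl rfl (by omega)
    calc C.comp G1 YA2 = C.comp (C.comp K1 K2) (C.comp K3 K4) := MEq.eq (mcomp c1 c2)
      _ = C.comp K1 (C.comp (C.comp K2 K3) K4) := by simp only [hM.comp_assoc]
      _ = C.comp K1 K4 := by rw [c3, hM.id_comp]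
      _ = C.comp YB2 G2 := by rw [hK1K1', hK4B, hex]
  have h3 : C.comp G2 YA3 = C.comp YA3 G0 := by
    rw [hG2, hYA3, hG0]
    exact cdisj hC i v 0 (γ 1 1) P.μ rfl (by omega) (by omega) rfl
      (by omega) rfl rfl (by omega)
  refine MEq.eq ?_
  calc (C.comp (Gdi C γ (n + 1) i) (Wd C γ P (n + 2) i))
      ≋ C.comp G0 (C.comp YA1 (C.comp YA2 YA3)) := mcomp hGdi hWdA
    _ ≋ C.comp (C.comp YB1 (C.comp YB2 YA3)) G0 :=
        MEq.ofEq (mladder hM G0 YA1 YA2 YA3 YB1 G1 YB2 G2 YA3 G0 h1 h2 h3)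
    _ ≋ C.comp (Wd C γ P (n + 2) (i + 1)) (Gdi C γ (n + 1) i) :=
        mcomp hWdB.symm hGdi.symm

end PwEq
section PwAll

variable {C : MonCatN} {γ : ∀ m n : ℕ, C.Hom (m + n) (n + m)} {P : PoalgebraIn C γ}

theorem mGG (hC : IsStrictSymMon C γ) (n i : ℕ) (hi : i ≤ n + 1) :
    MEq C (C.comp (Gdi C γ (n + 1) i) (Gdi C γ (n + 1) i))
      (C.id ((n + 1) + 2)) := by
  calc (C.comp (Gdi C γ (n + 1) i) (Gdi C γ (n + 1) i))
      ≋ C.comp (Lm C i (γ 1 1) ((n + 1) - i)) (Lm C i (γ 1 1) ((n + 1) - i)) :=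
        mcomp (mGdi hC (n + 1) i ((n + 1) - i) (by omega))
          (mGdi hC (n + 1) i ((n + 1) - i) (by omega))
    _ ≋ Lm C i (C.comp (γ 1 1) (γ 1 1)) ((n + 1) - i) := MEq.ofEq (Lm_comp hC _ _)
    _ ≋ Lm C i (C.id (1 + 1)) ((n + 1) - i) := by rw [hC.symmetry 1 1]; exact mrfl
    _ ≋ C.id ((i + (1 + 1)) + ((n + 1) - i)) := MEq.ofEq (Lm_id hC _ _ _)
    _ ≋ C.id ((n + 1) + 2) := mid (by omega)

/-- pointwise case `j = i + 1`. -/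
theorem pw_eq2 (hC : IsStrictSymMon C γ) (n i : ℕ) (hi : i ≤ n) :
    C.comp (Gdi C γ (n + 1) i) (Wd C γ P (n + 2) (i + 1)) =
      C.comp (Wd C γ P (n + 2) i) (Gdi C γ (n + 1) i) := by
  have hM := hC.toIsStrictMon
  have hGG := mGG hC n i (by omega)
  have h3 := pw_eq (P := P) hC n i hi
  set G := Gdi C γ (n + 1) i with hG
  set W0 := Wd C γ P (n + 2) i with hW0
  set W1 := Wd C γ P (n + 2) (i + 1) with hW1
  refine MEq.eq ?_
  calc (C.comp G W1)
      ≋ C.comp (C.comp G W1) (C.comp G G) := (mcomp_id_right hM hGG).symm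
    _ ≋ C.comp G (C.comp W1 (C.comp G G)) := MEq.ofEq (hM.comp_assoc _ _ _)
    _ ≋ C.comp G (C.comp (C.comp W1 G) G) :=
        mcomp mrfl (MEq.ofEq (hM.comp_assoc _ _ _)).symm
    _ ≋ C.comp G (C.comp (C.comp G W0) G) := by rw [← h3]; exact mrfl
    _ ≋ C.comp G (C.comp G (C.comp W0 G)) :=
        mcomp mrfl (MEq.ofEq (hM.comp_assoc _ _ _))
    _ ≋ C.comp (C.comp G G) (C.comp W0 G) := (MEq.ofEq (hM.comp_assoc _ _ _)).symm
    _ ≋ C.comp W0 G := mcomp_id_left hM hGG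

/-- The adjacent transposition on indices. -/
def tauN (i k : ℕ) : ℕ := if k = i then i + 1 else if k = i + 1 then i else k

/-- The pointwise commutation lemma. -/
theorem pw (hC : IsStrictSymMon C γ) (n i : ℕ) (hi : i ≤ n) (k : ℕ)
    (hk : k < n + 2) :
    C.comp (Gdi C γ (n + 1) i) (Wd C γ P (n + 2) k) =
      C.comp (Wd C γ P (n + 2) (tauN i k)) (Gdi C γ (n + 1) i) := by
  unfold tauN
  by_cases h1 : k = i
  · subst h1; rw [if_pos rfl]; exact pw_eq hC n k hi
  · rw [if_neg h1]
    by_cases h2 : k = i + 1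
    · subst h2; rw [if_pos rfl]; exact pw_eq2 hC n i hi
    · rw [if_neg h2]
      rcases lt_or_gt_of_ne h1 with h | h
      · exact pw_lt hC n i k h hi
      · exact pw_gt hC n i k (by omega) hk

end PwAll
section WcommSec

variable {C : MonCatN} {γ : ∀ m n : ℕ, C.Hom (m + n) (n + m)} {P : PoalgebraIn C γ}

theorem swaph (hM : IsStrictMon C) {a b c b' : ℕ} {X : C.Hom a b} {Y : C.Hom b c}
    {X' : C.Hom a b'} {Y' : C.Hom b' c} (h : C.comp X Y = C.comp X' Y')
    {d : ℕ} (Z : C.Hom c d) :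
    C.comp X (C.comp Y Z) = C.comp X' (C.comp Y' Z) := by
  rw [← hM.comp_assoc, h, hM.comp_assoc]

theorem mu3 (hC : IsStrictSymMon C γ) (P : PoalgebraIn C γ) :
    C.comp (Lm C 0 (γ 1 1) 1) (C.comp (Lm C 1 P.μ 0) P.μ) =
      C.comp (Lm C 1 P.μ 0) P.μ := by
  have hM := hC.toIsStrictMon
  set u0 := C.tensor (γ 1 1) (C.id 1) with hu0
  set u1 := C.tensor (C.id 1) P.μ with hu1
  set u2 := C.tensor P.μ (C.id 1) with hu2
  have hassoc : C.comp u2 P.μ = C.comp u1 P.μ := by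
    rw [hu1, hu2]; exact P.mul_assoc
  have e1 : MEq C (Lm C 0 (γ 1 1) 1) u0 := by rw [hu0]; exact (mT1r hC (γ 1 1)).symm
  have e2 : MEq C (Lm C 1 P.μ 0) u1 := by rw [hu1]; exact MEq.ofEq (T1l hC 1 P.μ)
  have e3 : MEq C (C.comp u0 u2)
      (C.tensor (C.comp (γ 1 1) P.μ) (C.comp (C.id 1) (C.id 1))) := by
    rw [hu0, hu2]
    exact MEq.ofEq (tcomp hC (γ 1 1) P.μ (C.id 1) (C.id 1))
  have e4 : MEq C (C.tensor (C.comp (γ 1 1) P.μ) (C.comp (C.id 1) (C.id 1))) u2 := by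
    rw [hu2]
    exact mtensor (MEq.ofEq P.mul_comm) (MEq.ofEq (hM.id_comp _))
  refine MEq.eq ?_
  calc (C.comp (Lm C 0 (γ 1 1) 1) (C.comp (Lm C 1 P.μ 0) P.μ))
      ≋ C.comp u0 (C.comp u1 P.μ) := mcomp e1 (mcomp e2 mrfl)
    _ ≋ C.comp u0 (C.comp u2 P.μ) := mcomp mrfl (MEq.ofEq hassoc.symm)
    _ ≋ C.comp (C.comp u0 u2) P.μ := (MEq.ofEq (hM.comp_assoc u0 u2 P.μ)).symm
    _ ≋ C.comp (C.tensor (C.comp (γ 1 1) P.μ) (C.comp (C.id 1) (C.id 1))) P.μ :=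
        mcomp e3 mrfl
    _ ≋ C.comp u2 P.μ := mcomp e4 mrfl
    _ ≋ C.comp u1 P.μ := MEq.ofEq hassoc
    _ ≋ C.comp (Lm C 1 P.μ 0) P.μ := mcomp e2.symm mrfl

theorem Wcomm (hC : IsStrictSymMon C γ) (n i : ℕ) (hi : i ≤ n) :
    C.comp (Wd C γ P (n + 2) i) (Wd C γ P (n + 2) (i + 1)) =
      C.comp (Wd C γ P (n + 2) (i + 1)) (Wd C γ P (n + 2) i) := by
  have hM := hC.toIsStrictMon
  obtain ⟨t, ht⟩ : ∃ t, n = i + t := ⟨n - i, by omega⟩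
  set S1 := (n + 2) + 1 with hS1
  set S2 := (n + 2) + 2 with hS2
  set S3 := (n + 2) + 3 with hS3
  set A1 := C.c S1 S2 (Lm C i P.δ (t + 2)) (by omega) (by omega) with hA1
  set A2 := C.c S2 S2 (Lm C (i + 1) (γ 1 (t + 1)) 1) (by omega) (by omega) with hA2
  set A3 := C.c S2 S1 (Lm C ((i + 2) + t) P.μ 0) (by omega) (by omega) with hA3
  set B1 := C.c S1 S2 (Lm C (i + 1) P.δ (t + 1)) (by omega) (by omega) with hB1
  set B2 := C.c S2 S2 (Lm C (i + 2) (γ 1 t) 1) (by omega) (by omega) with hB2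
  set A1c := C.c S2 S3 (Lm C i P.δ (t + 3)) (by omega) (by omega) with hA1c
  set A1d := C.c S2 S3 (Lm C i P.δ (1 + ((t + 1) + 1))) (by omega) (by omega) with hA1d
  set B1a := C.c S2 S3 (Lm C (i + 1) P.δ (t + 2)) (by omega) (by omega) with hB1a
  set B1b := C.c S2 S3 (Lm C (i + 2) P.δ (t + 1)) (by omega) (by omega) with hB1b
  set A2c := C.c S3 S3 (Lm C (i + 1) (γ 1 (t + 2)) 1) (by omega) (by omega) with hA2c
  set A2d := C.c S3 S3 (Lm C (i + 1) (γ 1 (t + 1)) 2) (by omega) (by omega) with hA2d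
  set A2e := C.c S3 S3 (Lm C (i + 1) (γ 1 (1 + (t + 1))) 1) (by omega) (by omega) with hA2e
  set A3b := C.c S3 S2 (Lm C ((i + 3) + t) P.μ 0) (by omega) (by omega) with hA3b
  set B2a := C.c S3 S3 (Lm C (i + 2) (γ 1 t) 2) (by omega) (by omega) with hB2a
  set B2b := C.c S3 S3 (Lm C (i + 3) (γ 1 t) 1) (by omega) (by omega) with hB2b
  set Gx := C.c S3 S3 (Lm C (n + 2) (γ 1 1) 1) (by omega) (by omega) with hGx
  have hWA : MEq C (Wd C γ P (n + 2) i) (C.comp A1 (C.comp A2 A3)) := by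
    rw [hA1, hA2, hA3]
    refine (mWd hC (n + 2) i (t + 1) (by omega)).trans (mcomp ?_ (mcomp ?_ ?_))
    · exact (mLcongr mrfl rfl (by omega)).trans (mc _ _ _).symm
    · exact ((mc _ _ _).trans (mLcongr mrfl rfl rfl)).trans (mc _ _ _).symm
    · exact (mLcongr mrfl (by omega) rfl).trans (mc _ _ _).symm
  have hWB : MEq C (Wd C γ P (n + 2) (i + 1)) (C.comp B1 (C.comp B2 A3)) := by
    rw [hB1, hB2, hA3]
    refine (mWd hC (n + 2) (i + 1) t (by omega)).trans (mcomp ?_ (mcomp ?_ ?_))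
    · exact (mLcongr mrfl rfl rfl).trans (mc _ _ _).symm
    · exact ((mc _ _ _).trans (mLcongr mrfl (by omega) rfl)).trans (mc _ _ _).symm
    · exact (mLcongr mrfl (by omega) rfl).trans (mc _ _ _).symm
  -- disjoint exchanges
  have w1 : C.comp A3 B1 = C.comp B1a A3b := by
    rw [hA3, hB1, hB1a, hA3b]
    exact (cdisj hC (i + 1) t 0 P.δ P.μ rfl (by omega) (by omega) rfl
      (by omega) rfl rfl (by omega)).symm
  have w3 : C.comp A1 B1b = C.comp B1 A1c := by
    rw [hA1, hB1b, hB1, hA1c]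
    exact cdisj hC i 0 (t + 1) P.δ P.δ rfl (by omega) (by omega) rfl
      (by omega) rfl rfl (by omega)
  have w4 : C.comp A3b B2 = C.comp B2a A3b := by
    rw [hA3b, hB2, hB2a]
    exact (cdisj hC (i + 2) 0 0 (γ 1 t) P.μ rfl (by omega) (by omega) rfl
      (by omega) rfl rfl (by omega)).symm
  have w6 : C.comp A1c B2b = C.comp B2 A1d := by
    rw [hA1c, hB2b, hB2, hA1d]
    exact cdisj hC i 1 1 P.δ (γ 1 t) rfl (by omega) (by omega) rfl
      (by omega) rfl rfl (by omega)
  have w1' : C.comp A3 A1 = C.comp A1c A3b := by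
    rw [hA3, hA1, hA1c, hA3b]
    exact (cdisj hC i (t + 1) 0 P.δ P.μ rfl (by omega) (by omega) rfl
      (by omega) rfl rfl (by omega)).symm
  have w2' : C.comp A3b A2 = C.comp A2d A3b := by
    rw [hA3b, hA2, hA2d]
    exact (cdisj hC (i + 1) 0 0 (γ 1 (t + 1)) P.μ rfl (by omega) (by omega) rfl
      (by omega) rfl rfl (by omega)).symm
  -- naturality step for the first δ
  have w2 : C.comp A2 B1a = C.comp B1b A2c := by
    set x := C.tensor P.δ (C.id t) with hx
    have nb : C.comp (C.tensor (C.id 1) x) (γ 1 (2 + t)) =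
        C.comp (γ 1 (1 + t)) (C.tensor x (C.id 1)) :=
      hC.braiding_natural (C.id 1) x
    have eA2 : MEq C A2 (Lm C (i + 1) (γ 1 (1 + t)) 1) := by
      rw [hA2]; exact (mc _ _ _).trans (mLcongr (mγarg rfl (by omega)) rfl rfl)
    have eB1a : MEq C B1a (Lm C (i + 1) (C.tensor x (C.id 1)) 1) := by
      rw [hB1a, hx]
      calc (C.c S2 S3 (Lm C (i + 1) P.δ (t + 2)) (by omega) (by omega))
          ≋ Lm C (i + 1) P.δ (t + 2) := mc _ _ _
        _ ≋ Lm C (((i + 1) + 0) + 0) P.δ (t + (1 + 1)) := mLcongr mrfl (by omega) (by omega)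
        _ ≋ Lm C ((i + 1) + 0) (Lm C 0 P.δ t) (1 + 1) :=
            mLnest hC ((i + 1) + 0) 0 P.δ t (1 + 1)
        _ ≋ Lm C ((i + 1) + 0) (C.tensor P.δ (C.id t)) (1 + 1) :=
            mLcongr (mT1r' hC P.δ t).symm rfl rfl
        _ ≋ Lm C (i + 1) (Lm C 0 (C.tensor P.δ (C.id t)) 1) 1 :=
            mLnest hC (i + 1) 0 (C.tensor P.δ (C.id t)) 1 1
        _ ≋ Lm C (i + 1) (C.tensor (C.tensor P.δ (C.id t)) (C.id 1)) 1 :=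
            mLcongr (mT1r hC (C.tensor P.δ (C.id t))).symm rfl rfl
    have eB1b : MEq C (Lm C (i + 1) (C.tensor (C.id 1) x) 1) B1b := by
      rw [hB1b, hx]
      calc (Lm C (i + 1) (C.tensor (C.id 1) (C.tensor P.δ (C.id t))) 1)
          ≋ Lm C (i + 1) (Lm C 1 (C.tensor P.δ (C.id t)) 0) 1 :=
            mLcongr (MEq.ofEq (T1l hC 1 _)).symm rfl rfl
        _ ≋ Lm C ((i + 1) + 1) (C.tensor P.δ (C.id t)) (0 + 1) :=
            (mLnest hC (i + 1) 1 _ 0 1).symm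
        _ ≋ Lm C ((i + 1) + 1) (Lm C 0 P.δ t) (0 + 1) :=
            mLcongr (mT1r' hC P.δ t) rfl rfl
        _ ≋ Lm C (((i + 1) + 1) + 0) P.δ (t + (0 + 1)) :=
            (mLnest hC ((i + 1) + 1) 0 P.δ t (0 + 1)).symm
        _ ≋ Lm C (i + 2) P.δ (t + 1) := mLcongr mrfl (by omega) (by omega)
        _ ≋ C.c S2 S3 (Lm C (i + 2) P.δ (t + 1)) (by omega) (by omega) := (mc _ _ _).symm
    have eA2c : MEq C (Lm C (i + 1) (γ 1 (2 + t)) 1) A2c := by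
      rw [hA2c]
      exact (mLcongr (mγarg rfl (by omega)) rfl rfl).trans (mc _ _ _).symm
    refine MEq.eq ?_
    calc (C.comp A2 B1a)
        ≋ C.comp (Lm C (i + 1) (γ 1 (1 + t)) 1)
            (Lm C (i + 1) (C.tensor x (C.id 1)) 1) := mcomp eA2 eB1a
      _ ≋ Lm C (i + 1) (C.comp (γ 1 (1 + t)) (C.tensor x (C.id 1))) 1 :=
          MEq.ofEq (Lm_comp hC _ _)
      _ ≋ Lm C (i + 1) (C.comp (C.tensor (C.id 1) x) (γ 1 (2 + t))) 1 := by
          rw [nb]; exact mrfl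
      _ ≋ C.comp (Lm C (i + 1) (C.tensor (C.id 1) x) 1)
            (Lm C (i + 1) (γ 1 (2 + t)) 1) := (MEq.ofEq (Lm_comp hC _ _)).symm
      _ ≋ C.comp B1b A2c := mcomp eB1b eA2c
  -- naturality step for the second crossing
  have w5 : C.comp A2c B2a = C.comp B2b A2e := by
    set x2 := C.tensor (C.id 1) (γ 1 t) with hx2
    have nb2 : C.comp (C.tensor (C.id 1) x2) (γ 1 (1 + (t + 1))) =
        C.comp (γ 1 (1 + (1 + t))) (C.tensor x2 (C.id 1)) :=
      hC.braiding_natural (C.id 1) x2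
    have eA2c : MEq C A2c (Lm C (i + 1) (γ 1 (1 + (1 + t))) 1) := by
      rw [hA2c]; exact (mc _ _ _).trans (mLcongr (mγarg rfl (by omega)) rfl rfl)
    have eB2a : MEq C B2a (Lm C (i + 1) (C.tensor x2 (C.id 1)) 1) := by
      rw [hB2a, hx2]
      calc (C.c S3 S3 (Lm C (i + 2) (γ 1 t) 2) (by omega) (by omega))
          ≋ Lm C (i + 2) (γ 1 t) 2 := mc _ _ _
        _ ≋ Lm C (((i + 1) + 0) + 1) (γ 1 t) (0 + (1 + 1)) :=
            mLcongr mrfl (by omega) (by omega)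
        _ ≋ Lm C ((i + 1) + 0) (Lm C 1 (γ 1 t) 0) (1 + 1) :=
            mLnest hC ((i + 1) + 0) 1 (γ 1 t) 0 (1 + 1)
        _ ≋ Lm C ((i + 1) + 0) (C.tensor (C.id 1) (γ 1 t)) (1 + 1) :=
            mLcongr (MEq.ofEq (T1l hC 1 (γ 1 t))) rfl rfl
        _ ≋ Lm C (i + 1) (Lm C 0 (C.tensor (C.id 1) (γ 1 t)) 1) 1 :=
            mLnest hC (i + 1) 0 _ 1 1
        _ ≋ Lm C (i + 1) (C.tensor (C.tensor (C.id 1) (γ 1 t)) (C.id 1)) 1 :=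
            mLcongr (mT1r hC _).symm rfl rfl
    have eB2b : MEq C (Lm C (i + 1) (C.tensor (C.id 1) x2) 1) B2b := by
      rw [hB2b, hx2]
      calc (Lm C (i + 1) (C.tensor (C.id 1) (C.tensor (C.id 1) (γ 1 t))) 1)
          ≋ Lm C (i + 1) (Lm C 1 (C.tensor (C.id 1) (γ 1 t)) 0) 1 :=
            mLcongr (MEq.ofEq (T1l hC 1 _)).symm rfl rfl
        _ ≋ Lm C ((i + 1) + 1) (C.tensor (C.id 1) (γ 1 t)) (0 + 1) :=
            (mLnest hC (i + 1) 1 _ 0 1).symm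
        _ ≋ Lm C ((i + 1) + 1) (Lm C 1 (γ 1 t) 0) (0 + 1) :=
            mLcongr (MEq.ofEq (T1l hC 1 (γ 1 t))).symm rfl rfl
        _ ≋ Lm C (((i + 1) + 1) + 1) (γ 1 t) (0 + (0 + 1)) :=
            (mLnest hC ((i + 1) + 1) 1 (γ 1 t) 0 (0 + 1)).symm
        _ ≋ Lm C (i + 3) (γ 1 t) 1 := mLcongr mrfl (by omega) (by omega)
        _ ≋ C.c S3 S3 (Lm C (i + 3) (γ 1 t) 1) (by omega) (by omega) := (mc _ _ _).symm
    have eA2e : MEq C (Lm C (i + 1) (γ 1 (1 + (t + 1))) 1) A2e := by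
      rw [hA2e]; exact (mc _ _ _).symm
    refine MEq.eq ?_
    calc (C.comp A2c B2a)
        ≋ C.comp (Lm C (i + 1) (γ 1 (1 + (1 + t))) 1)
            (Lm C (i + 1) (C.tensor x2 (C.id 1)) 1) := mcomp eA2c eB2a
      _ ≋ Lm C (i + 1) (C.comp (γ 1 (1 + (1 + t))) (C.tensor x2 (C.id 1))) 1 :=
          MEq.ofEq (Lm_comp hC _ _)
      _ ≋ Lm C (i + 1) (C.comp (C.tensor (C.id 1) x2) (γ 1 (1 + (t + 1)))) 1 := by
          rw [nb2]; exact mrfl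
      _ ≋ C.comp (Lm C (i + 1) (C.tensor (C.id 1) x2) 1)
            (Lm C (i + 1) (γ 1 (1 + (t + 1))) 1) := (MEq.ofEq (Lm_comp hC _ _)).symm
      _ ≋ C.comp B2b A2e := mcomp eB2b eA2e
  -- the hexagon split of the long crossing
  have hsplit : A2e = C.comp A2d Gx := by
    have e1 : MEq C (Lm C (i + 1) (C.tensor (γ 1 (t + 1)) (C.id 1)) 1) A2d := by
      rw [hA2d]
      calc (Lm C (i + 1) (C.tensor (γ 1 (t + 1)) (C.id 1)) 1)
          ≋ Lm C (i + 1) (Lm C 0 (γ 1 (t + 1)) 1) 1 :=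
            mLcongr (mT1r hC (γ 1 (t + 1))) rfl rfl
        _ ≋ Lm C ((i + 1) + 0) (γ 1 (t + 1)) (1 + 1) :=
            (mLnest hC (i + 1) 0 (γ 1 (t + 1)) 1 1).symm
        _ ≋ Lm C (i + 1) (γ 1 (t + 1)) 2 := mLcongr mrfl (by omega) (by omega)
        _ ≋ C.c S3 S3 (Lm C (i + 1) (γ 1 (t + 1)) 2) (by omega) (by omega) := (mc _ _ _).symm
    have e2 : MEq C
        (C.c (((i + 1) + (((t + 1) + 1) + 1)) + 1) (((i + 1) + ((t + 1) + (1 + 1))) + 1)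
          (Lm C (i + 1) (C.tensor (C.id (t + 1)) (γ 1 1)) 1) (by omega) rfl)
        Gx := by
      rw [hGx]
      calc (C.c (((i + 1) + (((t + 1) + 1) + 1)) + 1) (((i + 1) + ((t + 1) + (1 + 1))) + 1)
          (Lm C (i + 1) (C.tensor (C.id (t + 1)) (γ 1 1)) 1) (by omega) rfl)
          ≋ Lm C (i + 1) (C.tensor (C.id (t + 1)) (γ 1 1)) 1 := mc _ _ _
        _ ≋ Lm C (i + 1) (Lm C (t + 1) (γ 1 1) 0) 1 :=
            mLcongr (MEq.ofEq (T1l hC (t + 1) (γ 1 1))).symm rfl rfl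
        _ ≋ Lm C ((i + 1) + (t + 1)) (γ 1 1) (0 + 1) :=
            (mLnest hC (i + 1) (t + 1) (γ 1 1) 0 1).symm
        _ ≋ Lm C (n + 2) (γ 1 1) 1 := mLcongr mrfl (by omega) (by omega)
        _ ≋ C.c S3 S3 (Lm C (n + 2) (γ 1 1) 1) (by omega) (by omega) := (mc _ _ _).symm
    refine MEq.eq ?_
    calc A2e ≋ Lm C (i + 1) (γ 1 (1 + (t + 1))) 1 := by rw [hA2e]; exact mc _ _ _
      _ ≋ Lm C (i + 1) (γ 1 ((t + 1) + 1)) 1 := mLcongr (mγarg rfl (by omega)) rfl rfl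
      _ ≋ Lm C (i + 1)
            (C.comp (C.tensor (γ 1 (t + 1)) (C.id 1))
              (C.c (((t + 1) + 1) + 1) ((t + 1) + (1 + 1)) (C.tensor (C.id (t + 1)) (γ 1 1)))) 1 :=
          mLcongr (mhexr hC 1 (t + 1) 1) rfl rfl
      _ ≋ C.comp (Lm C (i + 1) (C.tensor (γ 1 (t + 1)) (C.id 1)) 1)
            (C.c (((i + 1) + (((t + 1) + 1) + 1)) + 1) (((i + 1) + ((t + 1) + (1 + 1))) + 1)
              (Lm C (i + 1) (C.tensor (C.id (t + 1)) (γ 1 1)) 1) (by omega) rfl) :=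
          (mLcomp2 hC (i + 1) 1 (C.tensor (γ 1 (t + 1)) (C.id 1))
            (C.tensor (C.id (t + 1)) (γ 1 1)) (by omega)).symm
      _ ≋ C.comp A2d Gx := mcomp e1 e2
  -- absorption of the extra crossing into the double merge
  have habs : C.comp Gx (C.comp A3b A3) = C.comp A3b A3 := by
    have eGx : MEq C Gx (Lm C (n + 2) (Lm C 0 (γ 1 1) 1) 0) := by
      rw [hGx]
      calc (C.c S3 S3 (Lm C (n + 2) (γ 1 1) 1) (by omega) (by omega))
          ≋ Lm C (n + 2) (γ 1 1) 1 := mc _ _ _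
        _ ≋ Lm C ((n + 2) + 0) (γ 1 1) (1 + 0) := mLcongr mrfl (by omega) (by omega)
        _ ≋ Lm C (n + 2) (Lm C 0 (γ 1 1) 1) 0 := mLnest hC (n + 2) 0 (γ 1 1) 1 0
    have eA3b : MEq C A3b (Lm C (n + 2) (Lm C 1 P.μ 0) 0) := by
      rw [hA3b]
      calc (C.c S3 S2 (Lm C ((i + 3) + t) P.μ 0) (by omega) (by omega))
          ≋ Lm C ((i + 3) + t) P.μ 0 := mc _ _ _
        _ ≋ Lm C ((n + 2) + 1) P.μ (0 + 0) := mLcongr mrfl (by omega) (by omega)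
        _ ≋ Lm C (n + 2) (Lm C 1 P.μ 0) 0 := mLnest hC (n + 2) 1 P.μ 0 0
    have eA3 : MEq C A3 (Lm C (n + 2) P.μ 0) := by
      rw [hA3]
      exact (mc _ _ _).trans (mLcongr mrfl (by omega) rfl)
    refine MEq.eq ?_
    calc (C.comp Gx (C.comp A3b A3))
        ≋ C.comp (Lm C (n + 2) (Lm C 0 (γ 1 1) 1) 0)
            (C.comp (Lm C (n + 2) (Lm C 1 P.μ 0) 0) (Lm C (n + 2) P.μ 0)) :=
          mcomp eGx (mcomp eA3b eA3)
      _ ≋ C.comp (Lm C (n + 2) (Lm C 0 (γ 1 1) 1) 0)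
            (Lm C (n + 2) (C.comp (Lm C 1 P.μ 0) P.μ) 0) :=
          mcomp mrfl (MEq.ofEq (Lm_comp hC _ _))
      _ ≋ Lm C (n + 2) (C.comp (Lm C 0 (γ 1 1) 1) (C.comp (Lm C 1 P.μ 0) P.μ)) 0 :=
          MEq.ofEq (Lm_comp hC _ _)
      _ ≋ Lm C (n + 2) (C.comp (Lm C 1 P.μ 0) P.μ) 0 := by
          rw [mu3 hC P]; exact mrfl
      _ ≋ C.comp (Lm C (n + 2) (Lm C 1 P.μ 0) 0) (Lm C (n + 2) P.μ 0) :=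
          (MEq.ofEq (Lm_comp hC _ _)).symm
      _ ≋ C.comp A3b A3 := mcomp eA3b.symm eA3.symm
  have hA1dc : A1d = A1c := by
    rw [hA1d, hA1c]
    exact MEq.eq (((mc _ _ _).trans (mLcongr mrfl rfl (by omega))).trans (mc _ _ _).symm)
  have core : C.comp A2e (C.comp A3b A3) = C.comp A2d (C.comp A3b A3) := by
    rw [hsplit, hM.comp_assoc, habs]
  have main : C.comp (C.comp A1 (C.comp A2 A3)) (C.comp B1 (C.comp B2 A3)) =
      C.comp (C.comp B1 (C.comp B2 A3)) (C.comp A1 (C.comp A2 A3)) := by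
    simp only [hM.comp_assoc]
    rw [swaph hM w1 (C.comp B2 A3)]
    rw [swaph hM w2 (C.comp A3b (C.comp B2 A3))]
    rw [swaph hM w3 (C.comp A2c (C.comp A3b (C.comp B2 A3)))]
    rw [swaph hM w4 A3]
    rw [swaph hM w5 (C.comp A3b A3)]
    rw [swaph hM w6 (C.comp A2e (C.comp A3b A3))]
    rw [hA1dc, core]
    rw [swaph hM w1' (C.comp A2 A3)]
    rw [swaph hM w2' A3]
  refine MEq.eq ?_
  calc (C.comp (Wd C γ P (n + 2) i) (Wd C γ P (n + 2) (i + 1)))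
      ≋ C.comp (C.comp A1 (C.comp A2 A3)) (C.comp B1 (C.comp B2 A3)) :=
        mcomp hWA hWB
    _ ≋ C.comp (C.comp B1 (C.comp B2 A3)) (C.comp A1 (C.comp A2 A3)) :=
        MEq.ofEq main
    _ ≋ C.comp (Wd C γ P (n + 2) (i + 1)) (Wd C γ P (n + 2) i) :=
        mcomp hWB.symm hWA.symm

end WcommSec
section ListsSec

variable {C : MonCatN} {γ : ∀ m n : ℕ, C.Hom (m + n) (n + m)} {P : PoalgebraIn C γ}

theorem foldl_comp_gen (hM : IsStrictMon C) {m : ℕ} (W : ℕ → C.Hom m m) :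
    ∀ (l : List ℕ) {a : ℕ} (e : C.Hom a m),
      l.foldl (fun g k => C.comp g (W k)) e =
        C.comp e (l.foldl (fun g k => C.comp g (W k)) (C.id m))
  | [], a, e => by simp [hM.comp_id]
  | k :: l, a, e => by
    simp only [List.foldl_cons]
    rw [foldl_comp_gen hM W l (C.comp e (W k)),
      foldl_comp_gen hM W l (C.comp (C.id m) (W k)), hM.id_comp, hM.comp_assoc]

/-- The fold of `W`'s over a list. -/
noncomputable def Fch (C : MonCatN) (γ : ∀ m n : ℕ, C.Hom (m + n) (n + m))
    (P : PoalgebraIn C γ) (n : ℕ) (l : List ℕ) : C.Hom (n + 2 + 1) (n + 2 + 1) :=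
  l.foldl (fun g k => C.comp g (Wd C γ P (n + 2) k)) (C.id (n + 2 + 1))

theorem Fch_nil (n : ℕ) : Fch C γ P n [] = C.id (n + 2 + 1) := rfl

theorem Fch_cons (hM : IsStrictMon C) (n k : ℕ) (l : List ℕ) :
    Fch C γ P n (k :: l) = C.comp (Wd C γ P (n + 2) k) (Fch C γ P n l) := by
  unfold Fch
  simp only [List.foldl_cons]
  rw [foldl_comp_gen hM _ l, hM.id_comp]

theorem WId_eq_Fch (n : ℕ) (I : Finset ℕ) :
    WId C γ P (n + 2) I = Fch C γ P n (I.sort (· ≤ ·)) := rfl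

/-- M1: the crossing moves through a fold, transposing indices. -/
theorem Gfold (hC : IsStrictSymMon C γ) (n i : ℕ) (hi : i ≤ n) :
    ∀ l : List ℕ, (∀ k ∈ l, k < n + 2) →
      C.comp (Gdi C γ (n + 1) i) (Fch C γ P n l) =
        C.comp (Fch C γ P n (l.map (tauN i))) (Gdi C γ (n + 1) i)
  | [], _ => by
    rw [List.map_nil, Fch_nil, hC.comp_id, hC.id_comp]
  | k :: l, hb => by
    have hM := hC.toIsStrictMon
    have hk : k < n + 2 := hb k (by simp)
    rw [List.map_cons, Fch_cons hM, Fch_cons hM, ← hM.comp_assoc,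
      pw hC n i hi k hk, hM.comp_assoc,
      Gfold hC n i hi l (fun a ha => hb a (by simp [ha])), ← hM.comp_assoc]

/-- M2 (both case): when `i` and `i+1` are both in the (sorted) list,
transposing is harmless. -/
theorem Fch_map_both (hC : IsStrictSymMon C γ) (n i : ℕ) :
    ∀ l : List ℕ, l.Pairwise (· < ·) → (∀ k ∈ l, k < n + 2) → i ∈ l → i + 1 ∈ l →
      Fch C γ P n (l.map (tauN i)) = Fch C γ P n l
  | [], _, _, hi, _ => by simp at hi
  | a :: l, hs, hb, hil, hil1 => by
    have hM := hC.toIsStrictMon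
    obtain ⟨ha, hl⟩ := List.pairwise_cons.mp hs
    rcases List.mem_cons.mp hil with rfl | himem
    · -- a = i ; then l = (i+1) :: l'
      rcases List.mem_cons.mp hil1 with h' | h'
      · omega
      · match l, h' with
        | b :: l', h' =>
          have hb' : b = i + 1 := by
            rcases List.mem_cons.mp h' with rfl | hmem
            · rfl
            · have h1 := ha b (by simp)
              have h2 := (List.pairwise_cons.mp hl).1 (i + 1) hmem
              omega
          subst hb'
          have hl' : ∀ k ∈ l', i + 1 < k := (List.pairwise_cons.mp hl).1
          have hmap : l'.map (tauN i) = l' := by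
            rw [show l' = l'.map id by simp]
            simp only [List.map_map]
            refine List.map_congr_left ?_
            intro x hx
            have := hl' x (by simpa using hx)
            simp only [Function.comp, id]
            unfold tauN
            rw [if_neg (by omega), if_neg (by omega)]
          have hτa : tauN i i = i + 1 := by unfold tauN; rw [if_pos rfl]
          have hτa1 : tauN i (i + 1) = i := by
            unfold tauN; rw [if_neg (by omega), if_pos rfl]
          rw [List.map_cons, List.map_cons, hτa, hτa1, hmap,
            Fch_cons hM, Fch_cons hM, Fch_cons hM, Fch_cons hM,
            ← hM.comp_assoc, ← hM.comp_assoc]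
          have hineq : i ≤ n := by have := hb (i + 1) (by simp); omega
          rw [← Wcomm hC n i hineq]
    · -- i ∈ l
      have hai : a < i := ha i himem
      have hil1' : i + 1 ∈ l := by
        rcases List.mem_cons.mp hil1 with h' | h'
        · omega
        · exact h'
      have hτa : tauN i a = a := by
        unfold tauN; rw [if_neg (by omega), if_neg (by omega)]
      rw [List.map_cons, hτa, Fch_cons hM, Fch_cons hM,
        Fch_map_both hC n i l hl (fun k hk => hb k (by simp [hk])) himem hil1']

/-- M2 (other case): when not both are present, the transposed sorted list is
the sort of the transposed set. -/
theorem sort_tauF (n i : ℕ) (I : Finset ℕ) (hnb : ¬(i ∈ I ∧ i + 1 ∈ I)) :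
    Finset.sort (tauF i I) (· ≤ ·) = (Finset.sort I (· ≤ ·)).map (tauN i) := by
  set L := Finset.sort I (· ≤ ·) with hL
  have hmemL : ∀ a, a ∈ L ↔ a ∈ I := fun a => Finset.mem_sort _
  have hsorted : L.Pairwise (· < ·) := (Finset.sortedLT_sort I).pairwise
  have hmono : ∀ a ∈ L, ∀ b ∈ L, a < b → tauN i a < tauN i b := by
    intro a haL b hbL hab
    have haI := (hmemL a).mp haL
    have hbI := (hmemL b).mp hbL
    unfold tauN
    by_cases h1 : a = i
    · subst h1
      rw [if_pos rfl]
      have hb1 : b ≠ a + 1 := fun h => hnb ⟨haI, h ▸ hbI⟩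
      rw [if_neg (by omega), if_neg hb1]
      omega
    · rw [if_neg h1]
      by_cases h2 : a = i + 1
      · subst h2
        have : i ∉ I := fun h => hnb ⟨h, haI⟩
        have hbne : b ≠ i := fun h => this (h ▸ hbI)
        rw [if_pos rfl, if_neg (by omega), if_neg (by omega)]
        omega
      · rw [if_neg h2]
        by_cases h3 : b = i
        · subst h3
          have : b + 1 ∉ I := fun h => hnb ⟨hbI, h⟩
          rw [if_pos rfl]; omega
        · rw [if_neg h3]
          by_cases h4 : b = i + 1
          · subst h4
            have : i ∉ I := fun h => hnb ⟨h, hbI⟩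
            have hane : a ≠ i := fun h => this (h ▸ haI)
            rw [if_pos rfl]; omega
          · rw [if_neg h4]; omega
  have hsorted' : (L.map (tauN i)).Pairwise (· < ·) := by
    rw [List.pairwise_map]
    exact hsorted.imp_of_mem (fun {a b} ha hb hab => hmono a ha b hb hab)
  have hnodup : (L.map (tauN i)).Nodup := hsorted'.nodup
  have htf : (L.map (tauN i)).toFinset = tauF i I := by
    ext a
    simp only [List.mem_toFinset, List.mem_map, tauF, Finset.mem_image]
    constructor
    · rintro ⟨b, hbL, rfl⟩
      exact ⟨b, (hmemL b).mp hbL, rfl⟩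
    · rintro ⟨b, hbI, rfl⟩
      exact ⟨b, (hmemL b).mpr hbI, rfl⟩
  rw [← htf]
  exact (List.toFinset_sort (· ≤ ·) hnodup).mpr (hsorted'.imp (fun {a b} h => le_of_lt h))

theorem tauF_both (i : ℕ) (I : Finset ℕ) (h1 : i ∈ I) (h2 : i + 1 ∈ I) :
    tauF i I = I := by
  ext a
  simp only [tauF, Finset.mem_image]
  constructor
  · rintro ⟨b, hbI, rfl⟩
    by_cases hb1 : b = i
    · subst hb1; rw [if_pos rfl]; exact h2
    · rw [if_neg hb1]
      by_cases hb2 : b = i + 1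
      · subst hb2; rw [if_pos rfl]; exact h1
      · rw [if_neg hb2]; exact hbI
  · intro haI
    by_cases ha1 : a = i
    · subst ha1
      exact ⟨a + 1, h2, by rw [if_neg (by omega), if_pos rfl]⟩
    · by_cases ha2 : a = i + 1
      · subst ha2
        exact ⟨i, h1, by rw [if_pos rfl]⟩
      · exact ⟨a, haI, by rw [if_neg ha1, if_neg ha2]⟩

/-- The `W`-level commutation. -/
theorem WIdstep (hC : IsStrictSymMon C γ) (n i : ℕ) (hi : i ≤ n) (I : Finset ℕ)
    (hI : ∀ a ∈ I, a < n + 2) :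
    C.comp (Gdi C γ (n + 1) i) (WId C γ P (n + 2) I) =
      C.comp (WId C γ P (n + 2) (tauF i I)) (Gdi C γ (n + 1) i) := by
  have hbL : ∀ k ∈ Finset.sort I (· ≤ ·), k < n + 2 := by
    intro k hk
    exact hI k (Finset.mem_sort _ |>.mp hk)
  by_cases hboth : i ∈ I ∧ i + 1 ∈ I
  · rw [WId_eq_Fch, WId_eq_Fch, tauF_both i I hboth.1 hboth.2,
      Gfold hC n i hi _ hbL,
      Fch_map_both hC n i _ (Finset.sortedLT_sort I).pairwise hbL
        ((Finset.mem_sort _).mpr hboth.1) ((Finset.mem_sort _).mpr hboth.2)]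
  · rw [WId_eq_Fch, WId_eq_Fch, sort_tauF n i I hboth, Gfold hC n i hi _ hbL]

end ListsSec
/-- the naturality-type identity exchanging the morphism `X`
adding a new internal event with an adjacent crossing `G^n_i = id_i ⊗ γ ⊗ id`:
`X_{I} ∘ G^n_i = G^{n+1}_i ∘ X_{τ^{n+1}_i(I)}` (diagrammatic order; on the
right the crossing acts on `n+3` strands, not touching the new last strand). -/
theorem X_crossing_naturality
    (C : MonCatN) (γ : ∀ m n : ℕ, C.Hom (m + n) (n + m))
    (hC : IsStrictSymMon C γ) (P : PoalgebraIn C γ)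
    (n i : ℕ) (hi : i ≤ n) (I : Finset ℕ) (hI : ∀ a ∈ I, a < n + 2) :
    C.comp (Gdi C γ n i) (Xd C γ P (n + 2) I) =
      C.comp (Xd C γ P (n + 2) (tauF i I)) (Gdi C γ (n + 1) i) := by
  have hM := hC.toIsStrictMon
  unfold Xd
  simp only [hM.comp_assoc]
  rw [swaph hM (Hstep hC n i hi) (C.comp (WId C γ P (n + 2) I) (Sd C γ P (n + 2)))]
  rw [swaph hM (WIdstep hC n i hi I hI) (Sd C γ P (n + 2))]
  rw [Sstep hC n i hi]
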